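/- arXiv:2312.05242 — 5 statements merged into one kernel-verified Lean document; each statement's English description precedes it below -/
import Mathlib

section
/- Let G be a simple, locally finite hypergraph with no isolated vertices such that G has no nontrivial automorphism. Then every connected component of Γ_G is an asymmetric graph, i.e., has no nontrivial graph automorphism. -/
open scoped symmDiff

variable {V : Type*}

def Indep (E : Set (Finset V)) (s : Set V) : Prop := ∀ e ∈ E, ¬ ((e : Set V) ⊆ s)

def SimpleHG (E : Set (Finset V)) : Prop :=
  (∀ e ∈ E, 1 < e.card) ∧ ∀ e ∈ E, ∀ e' ∈ E, e ⊆ e' → e = e'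

def LocFin (E : Set (Finset V)) : Prop := ∀ v : V, {e ∈ E | v ∈ e}.Finite

def Nbr (E : Set (Finset V)) (v w : V) : Prop := ∃ e ∈ E, v ∈ e ∧ w ∈ e

def Gamma (E : Set (Finset V)) : SimpleGraph {s : Set V // Indep E s} where
  Adj s t := ∃ v, s.1 ∆ t.1 = {v}
  symm := ⟨fun s t ⟨v, h⟩ => ⟨v, by rwa [symmDiff_comm]⟩⟩
  loopless := ⟨fun s ⟨v, h⟩ => by
    rw [symmDiff_self] at h
    exact absurd h.symm (Set.singleton_ne_empty v)⟩

def Comp (E : Set (Finset V)) (s : Set V) : Set {t : Set V // Indep E t} :=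
  {t | (s ∆ t.1).Finite}

def GammaComp (E : Set (Finset V)) (s : Set V) : SimpleGraph (Comp E s) :=
  (Gamma E).induce (Comp E s)

def xset (E : Set (Finset V)) (s : Set V) (v : V) : Set V :=
  s \ insert v {w | Nbr E v w}

def yset (E : Set (Finset V)) (s : Set V) (v : V) : Set V :=
  insert v (xset E s v)

def IsIsoHG {V W : Type*} (ES : Set (Finset V)) (ET : Set (Finset W)) (f : V → W) : Prop :=
  Function.Bijective f ∧ ∀ e : Finset V, e ∈ ES ↔ ∃ e' ∈ ET, (e' : Set W) = f '' (e : Set V)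

/- ### Auxiliary material -/

namespace Stmt10Aux

variable {E : Set (Finset V)} {s : Set V}

lemma indep_mono {t u : Set V} (h : Indep E t) (hu : u ⊆ t) : Indep E u :=
  fun e he hsub => h e he (hsub.trans hu)

lemma not_indep_iff {t : Set V} : ¬ Indep E t ↔ ∃ e ∈ E, (e : Set V) ⊆ t := by
  simp [Indep]

/-- symmdiff triangle identity -/
lemma sd_tri (A B C : Set V) : (A ∆ B) ∆ (B ∆ C) = A ∆ C := by
  ext x; simp only [Set.mem_symmDiff]; tauto

lemma sd_up {a : Set V} {v : V} (h : v ∉ a) : a ∆ (a ∪ {v}) = {v} := by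
  ext x; simp only [Set.mem_symmDiff, Set.mem_union, Set.mem_singleton_iff]
  constructor
  · rintro (⟨h1, h2⟩ | ⟨h1, h2⟩) <;> tauto
  · rintro rfl; tauto

lemma sd_down {a : Set V} {u : V} (h : u ∈ a) : a ∆ (a \ {u}) = {u} := by
  ext x; simp only [Set.mem_symmDiff, Set.mem_diff, Set.mem_singleton_iff]
  constructor
  · rintro (⟨h1, h2⟩ | ⟨h1, h2⟩) <;> tauto
  · rintro rfl; tauto

lemma sd_pair {a : Set V} {u v : V} (hu : u ∈ a) (hv : v ∉ a) :
    (a ∪ {v}) ∆ ((a \ {u}) ∪ {v}) = {u} := by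
  have huv : u ≠ v := fun h => hv (h ▸ hu)
  ext x
  simp only [Set.mem_symmDiff, Set.mem_union, Set.mem_diff, Set.mem_singleton_iff]
  constructor
  · rintro (⟨h1, h2⟩ | ⟨h1, h2⟩) <;> tauto
  · rintro rfl; tauto

lemma f_up {t : Set V} (v : V) : s ∆ (t ∪ {v}) ⊆ (s ∆ t) ∪ {v} := by
  intro x hx
  simp only [Set.mem_symmDiff, Set.mem_union, Set.mem_singleton_iff] at *
  tauto

lemma f_inter {t t' : Set V} : s ∆ (t ∩ t') ⊆ (s ∆ t) ∪ (s ∆ t') := by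
  intro x hx
  simp only [Set.mem_symmDiff, Set.mem_union, Set.mem_inter_iff] at *
  tauto

lemma f_sd {A B : Set V} : s ∆ (A ∆ B) ⊆ (s ∆ A) ∪ B := by
  intro x hx
  simp only [Set.mem_symmDiff, Set.mem_union] at *
  tauto

lemma image_sd {W : Type*} {f : V → W} (hf : Function.Injective f) (A B : Set V) :
    f '' (A ∆ B) = (f '' A) ∆ (f '' B) := by
  have h1 : A ∆ B = (A ∪ B) \ (A ∩ B) := by
    ext x; simp only [Set.mem_symmDiff, Set.mem_diff, Set.mem_union, Set.mem_inter_iff]; tauto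
  have h2 : (f '' A) ∆ (f '' B) = ((f '' A) ∪ (f '' B)) \ ((f '' A) ∩ (f '' B)) := by
    ext x; simp only [Set.mem_symmDiff, Set.mem_diff, Set.mem_union, Set.mem_inter_iff]; tauto
  rw [h1, h2, Set.image_diff hf, Set.image_union, Set.image_inter hf]

lemma eq_of_carrier {A B : ↥(Comp E s)} (h : A.1.1 = B.1.1) : A = B :=
  Subtype.ext (Subtype.ext h)

lemma adj_iff {a b : ↥(Comp E s)} :
    (GammaComp E s).Adj a b ↔ ∃ v, a.1.1 ∆ b.1.1 = {v} := Iff.rfl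

/-- element constructor -/
def el (t : Set V) (h1 : Indep E t) (h2 : (s ∆ t).Finite) : ↥(Comp E s) := ⟨⟨t, h1⟩, h2⟩

@[simp] lemma el_carrier (t : Set V) (h1 : Indep E t) (h2 : (s ∆ t).Finite) :
    (el t h1 h2 : ↥(Comp E s)).1.1 = t := rfl

variable (φ : GammaComp E s ≃g GammaComp E s)

/-- image symmdiff -/
def D2 (a b : ↥(Comp E s)) : Set V := (φ a).1.1 ∆ (φ b).1.1

lemma D2_def (a b : ↥(Comp E s)) : D2 φ a b = (φ a).1.1 ∆ (φ b).1.1 := rfl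

lemma D2_singleton {a b : ↥(Comp E s)} {v : V} (h : a.1.1 ∆ b.1.1 = {v}) :
    ∃ w, D2 φ a b = {w} := adj_iff.mp (φ.map_rel_iff.mpr (adj_iff.mpr ⟨v, h⟩))


lemma four_cycle {A B A2 B2 : ↥(Comp E s)} {v u : V}
    (h1 : A.1.1 ∆ B.1.1 = {v}) (h2 : A2.1.1 ∆ B2.1.1 = {v})
    (h3 : A.1.1 ∆ A2.1.1 = {u}) (h4 : B.1.1 ∆ B2.1.1 = {u})
    (hne1 : A.1.1 ≠ B2.1.1) (hne2 : B.1.1 ≠ A2.1.1) :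
    D2 φ A B = D2 φ A2 B2 := by
  obtain ⟨p, hp⟩ := D2_singleton φ h1
  obtain ⟨q, hq⟩ := D2_singleton φ h2
  obtain ⟨x, hx⟩ := D2_singleton φ h3
  obtain ⟨y, hy⟩ := D2_singleton φ h4
  rw [D2_def] at hp hq hx hy
  have hq' : (φ B2).1.1 ∆ (φ A2).1.1 = {q} := by rw [symmDiff_comm]; exact hq
  have hid : (({p} : Set V) ∆ {y}) ∆ {q} = {x} := by
    rw [← hp, ← hy, ← hq', sd_tri, sd_tri]; exact hx
  have key : p = q := by
    by_cases hpq : p = q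
    · exact hpq
    exfalso
    by_cases hyp : y = p
    · subst hyp
      rw [symmDiff_self, bot_symmDiff] at hid
      have hqx : q = x := Set.singleton_eq_singleton_iff.mp hid
      have e1 : (φ A).1.1 ∆ (φ A2).1.1 = (φ B2).1.1 ∆ (φ A2).1.1 := by
        rw [hx, hq', hqx]
      have e2 : (φ A).1.1 = (φ B2).1.1 := symmDiff_left_injective _ e1
      have hAB2 : A = B2 := φ.toEquiv.injective (eq_of_carrier e2)
      exact hne1 (congrArg (fun z => z.1.1) hAB2)
    by_cases hyq : y = q
    · subst hyq
      rw [symmDiff_symmDiff_cancel_right] at hid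
      have hpx : p = x := Set.singleton_eq_singleton_iff.mp hid
      have e1 : (φ A).1.1 ∆ (φ B).1.1 = (φ A).1.1 ∆ (φ A2).1.1 := by rw [hp, hx, hpx]
      have e2 : (φ B).1.1 = (φ A2).1.1 := symmDiff_right_injective _ e1
      have hBA2 : B = A2 := φ.toEquiv.injective (eq_of_carrier e2)
      exact hne2 (congrArg (fun z => z.1.1) hBA2)
    · have hpy : p ≠ y := fun h => hyp h.symm
      have hqp : q ≠ p := fun h => hpq h.symm
      have hqy : q ≠ y := fun h => hyq h.symm
      have hpmem : p ∈ (({p} : Set V) ∆ {y}) ∆ {q} := by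
        simp only [Set.mem_symmDiff, Set.mem_singleton_iff]; tauto
      have hqmem : q ∈ (({p} : Set V) ∆ {y}) ∆ {q} := by
        simp only [Set.mem_symmDiff, Set.mem_singleton_iff]; tauto
      rw [hid] at hpmem hqmem
      exact hpq ((Set.mem_singleton_iff.mp hpmem).trans (Set.mem_singleton_iff.mp hqmem).symm)
  rw [D2_def, D2_def, hp, hq, key]


lemma chain (v : V) : ∀ (n : ℕ) (a b : Set V), b ⊆ a → (a \ b).Finite → (a \ b).ncard ≤ n →
    v ∉ a →
    ∀ (A B A2 B2 : ↥(Comp E s)), A.1.1 = a → B.1.1 = a ∪ {v} → A2.1.1 = b →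
      B2.1.1 = b ∪ {v} → D2 φ A B = D2 φ A2 B2 := by
  intro n
  induction n with
  | zero =>
    intro a b hba hfin hcard _ A B A2 B2 hA hB hA2 hB2
    have hab : a = b := by
      have : (a \ b) = ∅ := (Set.ncard_eq_zero hfin).mp (Nat.le_zero.mp hcard)
      exact (Set.diff_eq_empty.mp this).antisymm hba
    subst hab
    rw [eq_of_carrier (hA.trans hA2.symm), eq_of_carrier (hB.trans hB2.symm)]
  | succ n ih =>
    intro a b hba hfin hcard hva A B A2 B2 hA hB hA2 hB2
    by_cases hab : a = b
    · subst hab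
      rw [eq_of_carrier (hA.trans hA2.symm), eq_of_carrier (hB.trans hB2.symm)]
    · have hne : (a \ b).Nonempty := by
        rw [Set.diff_nonempty]
        exact fun h => hab (h.antisymm hba)
      obtain ⟨u, hu⟩ := hne
      have hua : u ∈ a := hu.1
      have hub : u ∉ b := hu.2
      have huv : u ≠ v := fun h => hva (h ▸ hua)
      have hIa : Indep E a := hA ▸ A.1.2
      have hIb : Indep E (a ∪ {v}) := hB ▸ B.1.2
      have hfa : (s ∆ a).Finite := hA ▸ A.2
      have hfb : (s ∆ (a ∪ {v})).Finite := hB ▸ B.2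
      have hfa' : (s ∆ (a \ {u})).Finite := by
        refine (hfa.union (Set.finite_singleton u)).subset ?_
        intro x hx
        simp only [Set.mem_symmDiff, Set.mem_union, Set.mem_diff, Set.mem_singleton_iff] at *
        tauto
      have hfb' : (s ∆ ((a \ {u}) ∪ {v})).Finite := by
        refine (hfb.union (Set.finite_singleton u)).subset ?_
        intro x hx
        simp only [Set.mem_symmDiff, Set.mem_union, Set.mem_diff, Set.mem_singleton_iff] at *
        tauto
      have step1 : D2 φ A B =
          D2 φ (el (a \ {u}) (indep_mono hIa Set.diff_subset) hfa')
            (el ((a \ {u}) ∪ {v})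
              (indep_mono hIb (Set.union_subset_union_left _ Set.diff_subset)) hfb') := by
        refine four_cycle φ (v := v) (u := u) ?_ ?_ ?_ ?_ ?_ ?_
        · rw [hA, hB]; exact sd_up hva
        · show (a \ {u}) ∆ ((a \ {u}) ∪ {v}) = {v}
          exact sd_up (fun h => hva h.1)
        · rw [hA]; show a ∆ (a \ {u}) = {u}; exact sd_down hua
        · rw [hB]; exact sd_pair hua hva
        · rw [hA, el_carrier]
          intro h
          have hmem : u ∈ (a \ {u}) ∪ {v} := h ▸ hua
          rcases hmem with h' | h'
          · exact h'.2 rfl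
          · exact huv h'
        · rw [hB, el_carrier]
          intro h
          have hmem : v ∈ a \ {u} := h ▸ Set.mem_union_right _ rfl
          exact hva hmem.1
      have step2 : D2 φ (el (a \ {u}) (indep_mono hIa Set.diff_subset) hfa')
            (el ((a \ {u}) ∪ {v})
              (indep_mono hIb (Set.union_subset_union_left _ Set.diff_subset)) hfb')
          = D2 φ A2 B2 := by
        refine ih (a \ {u}) b ?_ ?_ ?_ ?_ _ _ A2 B2 rfl rfl hA2 hB2
        · intro x hx
          exact (Set.mem_diff _).mpr ⟨hba hx, fun h => hub (Set.mem_singleton_iff.mp h ▸ hx)⟩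
        · refine hfin.subset ?_
          intro x hx
          have h1 := (Set.mem_diff _).mp hx
          have h2 := (Set.mem_diff _).mp h1.1
          exact (Set.mem_diff _).mpr ⟨h2.1, h1.2⟩
        · have hEq : (a \ {u}) \ b = (a \ b) \ {u} := by
            ext x
            simp only [Set.mem_diff, Set.mem_singleton_iff]
            tauto
          rw [hEq]
          have := Set.ncard_diff_singleton_lt_of_mem ((Set.mem_diff _).mpr ⟨hua, hub⟩) hfin
          omega
        · exact fun h => hva ((Set.mem_diff _).mp h).1
      exact step1.trans step2


lemma nbrFin (hlf : LocFin E) (v : V) : {w | Nbr E v w}.Finite := by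
  have hsub : {w | Nbr E v w} ⊆ ⋃ e ∈ {e ∈ E | v ∈ e}, (e : Set V) := by
    rintro w ⟨e, he, hv, hw⟩
    exact Set.mem_biUnion ⟨he, hv⟩ hw
  exact (Set.Finite.biUnion (hlf v) (fun e _ => e.finite_toSet)).subset hsub

lemma xset_indep (hs : Indep E s) (v : V) : Indep E (xset E s v) :=
  indep_mono hs Set.diff_subset

lemma v_notin_xset (v : V) : v ∉ xset E s v := fun h => h.2 (Set.mem_insert v _)

lemma yset_eq (v : V) : yset E s v = xset E s v ∪ {v} := by
  rw [yset, Set.union_singleton]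

lemma yset_indep (hsimp : SimpleHG E) (hs : Indep E s) (v : V) : Indep E (yset E s v) := by
  intro e he hsub
  by_cases hv : v ∈ (e : Set V)
  · obtain ⟨w, hw, hwv⟩ : ∃ w ∈ e, w ≠ v := by
      have hcard := hsimp.1 e he
      by_contra hcon
      push_neg at hcon
      have : e ⊆ {v} := fun x hx => Finset.mem_singleton.mpr (hcon x hx)
      have := Finset.card_le_card this
      simp at this
      omega
    have hmem : w ∈ yset E s v := hsub hw
    rcases hmem with h | h
    · exact hwv h
    · exact h.2 (Set.mem_insert_of_mem _ ⟨e, he, hv, hw⟩)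
  · exact hs e he (fun x hx => by
      rcases hsub hx with h | h
      · exact absurd (h ▸ hx) hv
      · exact h.1)

lemma xset_fin (hlf : LocFin E) (v : V) : (s ∆ xset E s v).Finite := by
  refine ((nbrFin hlf v).insert v).subset ?_
  intro x hx
  rcases Set.mem_symmDiff.mp hx with ⟨h1, h2⟩ | ⟨h1, h2⟩
  · by_contra hc
    exact h2 ⟨h1, hc⟩
  · exact absurd h1.1 h2

lemma yset_fin (hlf : LocFin E) (v : V) : (s ∆ yset E s v).Finite := by
  refine (((nbrFin hlf v).insert v).union (Set.finite_singleton v)).subset ?_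
  intro x hx
  rcases Set.mem_symmDiff.mp hx with ⟨h1, h2⟩ | ⟨h1, h2⟩
  · left
    by_contra hc
    exact h2 (Set.mem_insert_of_mem _ ⟨h1, hc⟩)
  · rcases h1 with h | h
    · exact Or.inr h
    · exact absurd h.1 h2


noncomputable def xelt (hlf : LocFin E) (hs : Indep E s) (v : V) : ↥(Comp E s) :=
  el (xset E s v) (xset_indep hs v) (xset_fin hlf v)

noncomputable def yelt (hsimp : SimpleHG E) (hlf : LocFin E) (hs : Indep E s) (v : V) :
    ↥(Comp E s) :=
  el (yset E s v) (yset_indep hsimp hs v) (yset_fin hlf v)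

lemma xy_sd (v : V) : (xset E s v) ∆ (yset E s v) = {v} := by
  rw [yset_eq]; exact sd_up (v_notin_xset v)

noncomputable def dirf (hsimp : SimpleHG E) (hlf : LocFin E) (hs : Indep E s)
    (φ : GammaComp E s ≃g GammaComp E s) (v : V) : V :=
  Classical.choose
    (D2_singleton φ (a := xelt hlf hs v) (b := yelt hsimp hlf hs v) (xy_sd v))

lemma dirf_spec (hsimp : SimpleHG E) (hlf : LocFin E) (hs : Indep E s)
    (φ : GammaComp E s ≃g GammaComp E s) (v : V) :
    D2 φ (xelt hlf hs v) (yelt hsimp hlf hs v) = {dirf hsimp hlf hs φ v} :=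
  Classical.choose_spec
    (D2_singleton φ (a := xelt hlf hs v) (b := yelt hsimp hlf hs v) (xy_sd v))

lemma dir_eq_core (hsimp : SimpleHG E) (hlf : LocFin E) (hs : Indep E s)
    {a b : ↥(Comp E s)} {v : V} (h : a.1.1 ∆ b.1.1 = {v}) (hva : v ∉ a.1.1) :
    D2 φ a b = {dirf hsimp hlf hs φ v} := by
  have hb : b.1.1 = a.1.1 ∪ {v} := by
    have h1 : b.1.1 = a.1.1 ∆ {v} := by rw [← h, symmDiff_symmDiff_cancel_left]
    rw [h1]
    ext x
    simp only [Set.mem_symmDiff, Set.mem_union, Set.mem_singleton_iff]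
    constructor
    · rintro (⟨h1, h2⟩ | ⟨h1, h2⟩) <;> tauto
    · rintro (h1 | rfl)
      · exact Or.inl ⟨h1, fun hh => hva (hh ▸ h1)⟩
      · exact Or.inr ⟨rfl, hva⟩
  have hIm : Indep E (a.1.1 ∩ xset E s v) := indep_mono a.1.2 Set.inter_subset_left
  have hfm : (s ∆ (a.1.1 ∩ xset E s v)).Finite :=
    (a.2.union (xset_fin hlf v)).subset f_inter
  have hImv : Indep E ((a.1.1 ∩ xset E s v) ∪ {v}) :=
    indep_mono (hb ▸ b.1.2) (Set.union_subset_union_left _ Set.inter_subset_left)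
  have hfmv : (s ∆ ((a.1.1 ∩ xset E s v) ∪ {v})).Finite :=
    (hfm.union (Set.finite_singleton v)).subset (f_up v)
  have hfd1 : (a.1.1 \ (a.1.1 ∩ xset E s v)).Finite := by
    refine ((Set.Finite.union a.2 (xset_fin hlf (s := s) v)).subset ?_)
    intro x hx
    have hx1 := ((Set.mem_diff _).mp hx).1
    have hx2 := ((Set.mem_diff _).mp hx).2
    have hnx : x ∉ xset E s v := fun hh => hx2 ⟨hx1, hh⟩
    by_cases hxs : x ∈ s
    · exact Set.mem_union_right _ (Set.mem_symmDiff.mpr (Or.inl ⟨hxs, hnx⟩))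
    · exact Set.mem_union_left _ (Set.mem_symmDiff.mpr (Or.inr ⟨hx1, hxs⟩))
  have hfd2 : (xset E s v \ (a.1.1 ∩ xset E s v)).Finite := by
    refine a.2.subset ?_
    intro x hx
    have hx1 := ((Set.mem_diff _).mp hx).1
    have hx2 := ((Set.mem_diff _).mp hx).2
    have hna : x ∉ a.1.1 := fun hh => hx2 ⟨hh, hx1⟩
    exact Set.mem_symmDiff.mpr (Or.inl ⟨hx1.1, hna⟩)
  have chain1 : D2 φ a b = D2 φ (el _ hIm hfm) (el _ hImv hfmv) :=
    chain φ v _ a.1.1 (a.1.1 ∩ xset E s v) Set.inter_subset_left hfd1 le_rfl hva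
      a b _ _ rfl hb rfl rfl
  have chain2 : D2 φ (xelt hlf hs v) (yelt hsimp hlf hs v)
      = D2 φ (el _ hIm hfm) (el _ hImv hfmv) :=
    chain φ v _ (xset E s v) (a.1.1 ∩ xset E s v) Set.inter_subset_right hfd2 le_rfl
      (v_notin_xset v) _ _ _ _ rfl (yset_eq v) rfl rfl
  rw [chain1, ← chain2, dirf_spec]

lemma dir_eq (hsimp : SimpleHG E) (hlf : LocFin E) (hs : Indep E s)
    {a b : ↥(Comp E s)} {v : V} (h : a.1.1 ∆ b.1.1 = {v}) :
    D2 φ a b = {dirf hsimp hlf hs φ v} := by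
  by_cases hva : v ∈ a.1.1
  · have hvb : v ∉ b.1.1 := by
      intro hvb
      have hnm : v ∉ a.1.1 ∆ b.1.1 := by
        simp only [Set.mem_symmDiff]
        tauto
      rw [h] at hnm
      exact hnm rfl
    have h' : b.1.1 ∆ a.1.1 = {v} := by rw [symmDiff_comm]; exact h
    have hres := dir_eq_core φ hsimp hlf hs h' hvb
    rw [D2_def] at hres ⊢
    rw [symmDiff_comm]
    exact hres
  · exact dir_eq_core φ hsimp hlf hs h hva


lemma gf (hsimp : SimpleHG E) (hlf : LocFin E) (hs : Indep E s) (v : V) :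
    dirf hsimp hlf hs φ.symm (dirf hsimp hlf hs φ v) = v := by
  have h1 := dirf_spec hsimp hlf hs φ v
  rw [D2_def] at h1
  have h2 := dir_eq φ.symm hsimp hlf hs (a := φ (xelt hlf hs v)) (b := φ (yelt hsimp hlf hs v)) h1
  rw [D2_def, φ.symm_apply_apply, φ.symm_apply_apply] at h2
  have h3 : (xelt hlf hs v : ↥(Comp E s)).1.1 ∆ (yelt hsimp hlf hs v).1.1 = {v} := xy_sd v
  rw [h3] at h2
  exact (Set.singleton_eq_singleton_iff.mp h2).symm

lemma fg (hsimp : SimpleHG E) (hlf : LocFin E) (hs : Indep E s) (v : V) :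
    dirf hsimp hlf hs φ (dirf hsimp hlf hs φ.symm v) = v := by
  have h1 := dirf_spec hsimp hlf hs φ.symm v
  rw [D2_def] at h1
  have h2 := dir_eq φ hsimp hlf hs
    (a := φ.symm (xelt hlf hs v)) (b := φ.symm (yelt hsimp hlf hs v)) h1
  rw [D2_def, φ.apply_symm_apply, φ.apply_symm_apply] at h2
  have h3 : (xelt hlf hs v : ↥(Comp E s)).1.1 ∆ (yelt hsimp hlf hs v).1.1 = {v} := xy_sd v
  rw [h3] at h2
  exact (Set.singleton_eq_singleton_iff.mp h2).symm

lemma diff_fin (T T' : ↥(Comp E s)) : (T.1.1 \ T'.1.1).Finite := by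
  refine (T.2.union T'.2).subset ?_
  intro x hx
  have hx1 := ((Set.mem_diff _).mp hx).1
  have hx2 := ((Set.mem_diff _).mp hx).2
  by_cases hxs : x ∈ s
  · exact Set.mem_union_right _ (Set.mem_symmDiff.mpr (Or.inl ⟨hxs, hx2⟩))
  · exact Set.mem_union_left _ (Set.mem_symmDiff.mpr (Or.inr ⟨hx1, hxs⟩))

lemma formula_sub (hsimp : SimpleHG E) (hlf : LocFin E) (hs : Indep E s)
    (hinj : Function.Injective (dirf hsimp hlf hs φ)) :
    ∀ (n : ℕ) (T T' : ↥(Comp E s)), T'.1.1 ⊆ T.1.1 → (T.1.1 \ T'.1.1).ncard ≤ n →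
      D2 φ T T' = dirf hsimp hlf hs φ '' (T.1.1 ∆ T'.1.1) := by
  intro n
  induction n with
  | zero =>
    intro T T' hsub hcard
    have hemp : T.1.1 \ T'.1.1 = ∅ :=
      (Set.ncard_eq_zero (diff_fin T T')).mp (Nat.le_zero.mp hcard)
    have hTT : T = T' := eq_of_carrier ((Set.diff_eq_empty.mp hemp).antisymm hsub)
    subst hTT
    rw [D2_def, symmDiff_self, symmDiff_self]
    simp
  | succ n ih =>
    intro T T' hsub hcard
    by_cases hTT : T.1.1 = T'.1.1
    · have hTT' : T = T' := eq_of_carrier hTT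
      subst hTT'
      rw [D2_def, symmDiff_self, symmDiff_self]
      simp
    · have hne : (T.1.1 \ T'.1.1).Nonempty := by
        rw [Set.diff_nonempty]
        exact fun h => hTT (h.antisymm hsub)
      obtain ⟨u, hu⟩ := hne
      have huT : u ∈ T.1.1 := ((Set.mem_diff _).mp hu).1
      have huT' : u ∉ T'.1.1 := ((Set.mem_diff _).mp hu).2
      have hfT1 : (s ∆ (T.1.1 \ {u})).Finite := by
        refine (T.2.union (Set.finite_singleton u)).subset ?_
        intro x hx
        simp only [Set.mem_symmDiff, Set.mem_union, Set.mem_diff, Set.mem_singleton_iff] at *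
        tauto
      have h1 : D2 φ T (el (T.1.1 \ {u}) (indep_mono T.1.2 Set.diff_subset) hfT1)
          = {dirf hsimp hlf hs φ u} :=
        dir_eq φ hsimp hlf hs (sd_down huT)
      have h2 : D2 φ (el (T.1.1 \ {u}) (indep_mono T.1.2 Set.diff_subset) hfT1) T'
          = dirf hsimp hlf hs φ '' ((T.1.1 \ {u}) ∆ T'.1.1) := by
        refine ih _ T' ?_ ?_
        · intro x hx
          exact (Set.mem_diff _).mpr ⟨hsub hx, fun h => huT' (Set.mem_singleton_iff.mp h ▸ hx)⟩
        · show ((T.1.1 \ {u}) \ T'.1.1).ncard ≤ n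
          have hEq : (T.1.1 \ {u}) \ T'.1.1 = (T.1.1 \ T'.1.1) \ {u} := by
            ext x
            simp only [Set.mem_diff, Set.mem_singleton_iff]
            tauto
          rw [hEq]
          have := Set.ncard_diff_singleton_lt_of_mem hu (diff_fin T T')
          omega
      have hcomb : D2 φ T T'
          = ({dirf hsimp hlf hs φ u} : Set V) ∆ (dirf hsimp hlf hs φ '' ((T.1.1 \ {u}) ∆ T'.1.1)) := by
        rw [← h1, ← h2, D2_def, D2_def, D2_def, sd_tri]
      rw [hcomb, ← Set.image_singleton, ← image_sd hinj]
      refine congrArg _ ?_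
      ext x
      simp only [Set.mem_symmDiff, Set.mem_diff, Set.mem_singleton_iff]
      by_cases hxu : x = u
      · subst hxu
        tauto
      · tauto

lemma formula (hsimp : SimpleHG E) (hlf : LocFin E) (hs : Indep E s)
    (hinj : Function.Injective (dirf hsimp hlf hs φ)) (T T' : ↥(Comp E s)) :
    D2 φ T T' = dirf hsimp hlf hs φ '' (T.1.1 ∆ T'.1.1) := by
  have hIm : Indep E (T.1.1 ∩ T'.1.1) := indep_mono T.1.2 Set.inter_subset_left
  have hfm : (s ∆ (T.1.1 ∩ T'.1.1)).Finite := (T.2.union T'.2).subset f_inter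
  have hM := el (T.1.1 ∩ T'.1.1) hIm hfm
  have h1 : D2 φ T (el (T.1.1 ∩ T'.1.1) hIm hfm)
      = dirf hsimp hlf hs φ '' (T.1.1 ∆ (T.1.1 ∩ T'.1.1)) :=
    formula_sub φ hsimp hlf hs hinj _ T _ Set.inter_subset_left le_rfl
  have h2 : D2 φ T' (el (T.1.1 ∩ T'.1.1) hIm hfm)
      = dirf hsimp hlf hs φ '' (T'.1.1 ∆ (T.1.1 ∩ T'.1.1)) :=
    formula_sub φ hsimp hlf hs hinj _ T' _ Set.inter_subset_right le_rfl
  have h2' : D2 φ (el (T.1.1 ∩ T'.1.1) hIm hfm) T'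
      = dirf hsimp hlf hs φ '' ((T.1.1 ∩ T'.1.1) ∆ T'.1.1) := by
    rw [D2_def, symmDiff_comm, ← D2_def, h2, symmDiff_comm]
  have hcomb : D2 φ T T'
      = (dirf hsimp hlf hs φ '' (T.1.1 ∆ (T.1.1 ∩ T'.1.1)))
        ∆ (dirf hsimp hlf hs φ '' ((T.1.1 ∩ T'.1.1) ∆ T'.1.1)) := by
    rw [← h1, ← h2', D2_def, D2_def, D2_def, sd_tri]
  rw [hcomb, ← image_sd hinj, sd_tri]


noncomputable def s0 (hs : Indep E s) : ↥(Comp E s) :=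
  el s hs (by rw [symmDiff_self]; exact Set.finite_empty)

lemma master (hsimp : SimpleHG E) (hlf : LocFin E) (hs : Indep E s)
    (hinj : Function.Injective (dirf hsimp hlf hs φ)) (X : Set V) (hXfin : (s ∆ X).Finite) :
    Indep E X ↔
      Indep E ((φ (s0 hs)).1.1 ∆ (dirf hsimp hlf hs φ '' (s ∆ X))) := by
  constructor
  · intro hIX
    have hf := formula φ hsimp hlf hs hinj (el X hIX hXfin) (s0 hs)
    rw [D2_def] at hf
    have hT1 : (φ (el X hIX hXfin)).1.1
        = ((φ (el X hIX hXfin)).1.1 ∆ (φ (s0 hs)).1.1) ∆ (φ (s0 hs)).1.1 :=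
      (symmDiff_symmDiff_cancel_right _ _).symm
    rw [hf] at hT1
    have hcar : (el X hIX hXfin : ↥(Comp E s)).1.1 ∆ (s0 hs : ↥(Comp E s)).1.1 = X ∆ s := rfl
    rw [hcar, symmDiff_comm X s, symmDiff_comm] at hT1
    exact hT1 ▸ (φ (el X hIX hXfin)).1.2
  · intro hI
    have hfin2 : (s ∆ ((φ (s0 hs)).1.1 ∆ (dirf hsimp hlf hs φ '' (s ∆ X)))).Finite :=
      ((φ (s0 hs)).2.union (hXfin.image _)).subset f_sd
    have happ : φ (φ.symm (el _ hI hfin2)) = el _ hI hfin2 := φ.apply_symm_apply _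
    have hf := formula φ hsimp hlf hs hinj (φ.symm (el _ hI hfin2)) (s0 hs)
    rw [D2_def, happ] at hf
    have hcar : (el ((φ (s0 hs)).1.1 ∆ (dirf hsimp hlf hs φ '' (s ∆ X))) hI hfin2
        : ↥(Comp E s)).1.1 = (φ (s0 hs)).1.1 ∆ (dirf hsimp hlf hs φ '' (s ∆ X)) := rfl
    have hcar2 : (s0 hs : ↥(Comp E s)).1.1 = s := rfl
    rw [hcar, hcar2] at hf
    have hLHS : ((φ (s0 hs)).1.1 ∆ (dirf hsimp hlf hs φ '' (s ∆ X))) ∆ (φ (s0 hs)).1.1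
        = dirf hsimp hlf hs φ '' (s ∆ X) := by
      rw [symmDiff_comm _ ((φ (s0 hs)).1.1), symmDiff_symmDiff_cancel_left]
    rw [hLHS] at hf
    have hXeq : s ∆ X = (φ.symm (el _ hI hfin2)).1.1 ∆ s :=
      Set.image_injective.mpr hinj hf
    have hXc : (φ.symm (el _ hI hfin2)).1.1 = X := by
      have h2 : ((φ.symm (el _ hI hfin2)).1.1 ∆ s) ∆ s = X := by
        rw [← hXeq, symmDiff_comm s X, symmDiff_symmDiff_cancel_right]
      rw [symmDiff_symmDiff_cancel_right] at h2
      exact h2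
    exact hXc ▸ (φ.symm (el _ hI hfin2)).1.2


lemma comb1 (hsimp : SimpleHG E) (hs : Indep E s) {e : Finset V} (he : e ∈ E) {v : V}
    (hv : v ∈ e) {N F : Set V}
    (hNup : ∀ e' ∈ E, ((e' : Set V) ∩ (e : Set V)).Nonempty → (e' : Set V) ⊆ N)
    (hF : F ⊆ (e : Set V) \ {v}) : Indep E (F ∪ (s \ N)) := by
  intro e' he' hsub
  by_cases hmeet : ((e' : Set V) ∩ F).Nonempty
  · obtain ⟨w, hw⟩ := hmeet
    have hwe' : w ∈ (e' : Set V) := hw.1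
    have hwF : w ∈ F := hw.2
    have hNe' : (e' : Set V) ⊆ N := hNup e' he' ⟨w, hwe', (hF hwF).1⟩
    have hsubF : (e' : Set V) ⊆ F := by
      intro x hx
      rcases hsub hx with h | h
      · exact h
      · exact absurd (hNe' hx) h.2
    have hee : e' ⊆ e :=
      Finset.coe_subset.mp ((hsubF.trans hF).trans Set.diff_subset)
    have heq : e' = e := hsimp.2 e' he' e he hee
    subst heq
    exact (hF (hsubF (Finset.mem_coe.mpr hv))).2 rfl
  · have hss : (e' : Set V) ⊆ s := by
      intro x hx
      rcases hsub hx with h | h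
      · exact absurd ⟨x, Set.mem_inter hx h⟩ hmeet
      · exact h.1
    exact hs e' he' hss

lemma comb2 (hsimp : SimpleHG E) (hs : Indep E s) {e : Finset V} (he : e ∈ E) {v : V}
    (hv : v ∈ e) {N F : Set V}
    (hNup : ∀ e' ∈ E, ((e' : Set V) ∩ (e : Set V)).Nonempty → (e' : Set V) ⊆ N)
    (hF : F ⊆ (e : Set V) \ {v}) (hproper : ∃ u, u ∈ (e : Set V) ∧ u ≠ v ∧ u ∉ F) :
    Indep E ((F ∪ (s \ N)) ∪ {v}) := by
  intro e' he' hsub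
  by_cases hve' : v ∈ (e' : Set V)
  · have hNe' : (e' : Set V) ⊆ N := hNup e' he' ⟨v, hve', Finset.mem_coe.mpr hv⟩
    have hsubFv : (e' : Set V) ⊆ F ∪ {v} := by
      intro x hx
      rcases hsub hx with (h | h) | h
      · exact Set.mem_union_left _ h
      · exact absurd (hNe' hx) h.2
      · exact Set.mem_union_right _ h
    have hee : e' ⊆ e := by
      refine Finset.coe_subset.mp (hsubFv.trans ?_)
      intro x hx
      rcases hx with h | h
      · exact (hF h).1
      · exact h ▸ Finset.mem_coe.mpr hv
    have heq : e' = e := hsimp.2 e' he' e he hee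
    subst heq
    obtain ⟨u, hu, huv, huF⟩ := hproper
    rcases hsubFv hu with h | h
    · exact huF h
    · exact huv h
  · have hsub2 : (e' : Set V) ⊆ F ∪ (s \ N) := by
      intro x hx
      rcases hsub hx with h | h
      · exact h
      · exact absurd (h ▸ hx) hve'
    exact comb1 hsimp hs he hv hNup hF e' he' hsub2

lemma key (hsimp : SimpleHG E) (hlf : LocFin E) (hs : Indep E s)
    (f : V → V) (hinj : Function.Injective f) (S : Set V)
    (hmaster : ∀ X : Set V, (s ∆ X).Finite → (Indep E X ↔ Indep E (S ∆ (f '' (s ∆ X)))))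
    {e : Finset V} (he : e ∈ E) (v : V) (hv : v ∈ e) :
    ∃ ee ∈ E, f '' (e : Set V) ⊆ (ee : Set V) := by
  classical
  set N : Set V := {w | ∃ u ∈ (e : Set V), Nbr E u w} with hNdef
  have hNfin : N.Finite := by
    have hsub : N ⊆ ⋃ u ∈ (e : Set V), {w | Nbr E u w} := by
      rintro w ⟨u, hu, hw⟩
      exact Set.mem_biUnion hu hw
    exact (Set.Finite.biUnion e.finite_toSet (fun u _ => nbrFin hlf u)).subset hsub
  have hNup : ∀ e' ∈ E, ((e' : Set V) ∩ (e : Set V)).Nonempty → (e' : Set V) ⊆ N := by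
    rintro e' he' ⟨u, hu1, hu2⟩ x hx
    exact ⟨u, hu2, e', he', hu1, hx⟩
  have heN : (e : Set V) ⊆ N := fun x hx => ⟨x, hx, e, he, hx, hx⟩
  set Xfull : Set V := (((e : Set V) \ {v}) ∪ (s \ N)) ∪ {v} with hXdef
  have hXffin : (s ∆ Xfull).Finite := by
    refine (((e.finite_toSet.union (Set.finite_singleton v)).union
      (hNfin.subset (Set.inter_subset_right (s := s))))).subset ?_
    intro x hx
    rcases Set.mem_symmDiff.mp hx with ⟨h1, h2⟩ | ⟨h1, h2⟩
    · right
      refine ⟨h1, ?_⟩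
      by_contra hxN
      exact h2 (Set.mem_union_left _ (Set.mem_union_right _ ⟨h1, hxN⟩))
    · left
      rcases h1 with (h | h) | h
      · exact Or.inl h.1
      · exact absurd h.1 h2
      · exact Or.inr h
  have hmemX : ∀ u ∈ (e : Set V), u ∈ Xfull := by
    intro u hu
    by_cases huv : u = v
    · exact Set.mem_union_right _ (huv ▸ rfl)
    · exact Set.mem_union_left _ (Set.mem_union_left _ ⟨hu, huv⟩)
  have hnotindep : ¬ Indep E Xfull := fun h => h e he (fun x hx => hmemX x hx)
  have h1 : ¬ Indep E (S ∆ (f '' (s ∆ Xfull))) :=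
    fun hh => hnotindep ((hmaster Xfull hXffin).mpr hh)
  obtain ⟨ee, hee, hsubB⟩ := not_indep_iff.mp h1
  refine ⟨ee, hee, ?_⟩
  rintro w ⟨u, hu, rfl⟩
  by_contra hfu
  have huX : u ∈ Xfull := hmemX u hu
  have hX'sd : Xfull \ {u} = Xfull ∆ {u} := by
    ext x
    simp only [Set.mem_symmDiff, Set.mem_diff, Set.mem_singleton_iff]
    constructor
    · intro h; exact Or.inl h
    · rintro (h | h)
      · exact h
      · exact absurd (h.1 ▸ huX) h.2
  have hIX' : Indep E (Xfull \ {u}) := by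
    by_cases huv : u = v
    · subst huv
      have hseteq : Xfull \ {u} = ((e : Set V) \ {u}) ∪ (s \ N) := by
        have huN : u ∈ N := heN hu
        ext x
        simp only [hXdef, Set.mem_diff, Set.mem_union, Set.mem_singleton_iff]
        constructor
        · rintro ⟨(h | h) | h, hne⟩
          · exact Or.inl h
          · exact Or.inr h
          · exact absurd h hne
        · rintro (h | h)
          · exact ⟨Or.inl (Or.inl h), h.2⟩
          · exact ⟨Or.inl (Or.inr h), fun hh => (hh ▸ h).2 huN⟩
      rw [hseteq]
      exact comb1 hsimp hs he hv hNup Set.Subset.rfl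
    · have huN : u ∈ N := heN hu
      have hseteq : Xfull \ {u} = (((((e : Set V) \ {v}) \ {u}) ∪ (s \ N)) ∪ {v}) := by
        ext x
        simp only [hXdef, Set.mem_diff, Set.mem_union, Set.mem_singleton_iff]
        constructor
        · rintro ⟨(h | h) | h, hne⟩
          · exact Or.inl (Or.inl ⟨h, hne⟩)
          · exact Or.inl (Or.inr h)
          · exact Or.inr h
        · rintro ((h | h) | h)
          · exact ⟨Or.inl (Or.inl h.1), h.2⟩
          · exact ⟨Or.inl (Or.inr h), fun hh => (hh ▸ h).2 huN⟩
          · exact ⟨Or.inr h, fun hh => huv ((hh ▸ h) ▸ rfl)⟩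
      rw [hseteq]
      refine comb2 hsimp hs he hv hNup Set.diff_subset ⟨u, hu, huv, fun h => h.2 rfl⟩
  have hfinX' : (s ∆ (Xfull \ {u})).Finite := by
    rw [hX'sd]
    exact ((hXffin.union (Set.finite_singleton u)).subset f_sd)
  have hIB' : Indep E (S ∆ (f '' (s ∆ (Xfull \ {u})))) := (hmaster _ hfinX').mp hIX'
  have hfeq : S ∆ (f '' (s ∆ (Xfull \ {u})))
      = (S ∆ (f '' (s ∆ Xfull))) ∆ {f u} := by
    rw [hX'sd, ← symmDiff_assoc, image_sd hinj, Set.image_singleton, ← symmDiff_assoc]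
  refine hIB' ee hee ?_
  intro x hx
  rw [hfeq]
  refine Set.mem_symmDiff.mpr (Or.inl ⟨hsubB hx, ?_⟩)
  intro hxe
  exact hfu (Set.mem_singleton_iff.mp hxe ▸ hx)

end Stmt10Aux

open Stmt10Aux in
theorem stmt10 (E : Set (Finset V)) (hsimp : SimpleHG E) (hlf : LocFin E)
    (hni : ∀ v : V, ∃ e ∈ E, v ∈ e)
    (hasym : ∀ f : V → V, IsIsoHG E E f → ∀ v, f v = v) :
    ∀ (s : Set V) (_hs : Indep E s) (φ : GammaComp E s ≃g GammaComp E s) (x : Comp E s),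
      φ x = x := by
  intro s hs φ x
  have hgf : ∀ v, dirf hsimp hlf hs φ.symm (dirf hsimp hlf hs φ v) = v := gf φ hsimp hlf hs
  have hfg : ∀ v, dirf hsimp hlf hs φ (dirf hsimp hlf hs φ.symm v) = v := fg φ hsimp hlf hs
  have hinjf : Function.Injective (dirf hsimp hlf hs φ) := Function.LeftInverse.injective hgf
  have hinjg : Function.Injective (dirf hsimp hlf hs φ.symm) :=
    Function.LeftInverse.injective hfg
  have keyf : ∀ e ∈ E, ∃ ee ∈ E, dirf hsimp hlf hs φ '' (e : Set V) ⊆ (ee : Set V) := by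
    intro e he
    obtain ⟨v, hv⟩ := Finset.card_pos.mp (lt_trans Nat.zero_lt_one (hsimp.1 e he))
    exact key hsimp hlf hs _ hinjf _ (fun X hX => master φ hsimp hlf hs hinjf X hX) he v hv
  have keyg : ∀ e ∈ E, ∃ ee ∈ E, dirf hsimp hlf hs φ.symm '' (e : Set V) ⊆ (ee : Set V) := by
    intro e he
    obtain ⟨v, hv⟩ := Finset.card_pos.mp (lt_trans Nat.zero_lt_one (hsimp.1 e he))
    exact key hsimp hlf hs _ hinjg _
      (fun X hX => master φ.symm hsimp hlf hs hinjg X hX) he v hv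
  have fwd : ∀ (f1 g1 : V → V), (∀ v, g1 (f1 v) = v) → (∀ v, f1 (g1 v) = v) →
      (∀ e ∈ E, ∃ ee ∈ E, f1 '' (e : Set V) ⊆ (ee : Set V)) →
      (∀ e ∈ E, ∃ ee ∈ E, g1 '' (e : Set V) ⊆ (ee : Set V)) →
      ∀ e ∈ E, ∃ ee ∈ E, (ee : Set V) = f1 '' (e : Set V) := by
    intro f1 g1 hg1f1 hf1g1 k1 k2 e he
    have hcomp : ∀ A : Set V, g1 '' (f1 '' A) = A := by
      intro A
      rw [Set.image_image]
      simp only [hg1f1]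
      simp
    obtain ⟨ee, hee, h1⟩ := k1 e he
    obtain ⟨ee2, hee2, h2⟩ := k2 ee hee
    have hsub : (e : Set V) ⊆ (ee2 : Set V) := by
      calc (e : Set V) = g1 '' (f1 '' (e : Set V)) := (hcomp _).symm
        _ ⊆ g1 '' (ee : Set V) := Set.image_mono h1
        _ ⊆ (ee2 : Set V) := h2
    have hEq : e = ee2 := hsimp.2 e he ee2 hee2 (Finset.coe_subset.mp hsub)
    refine ⟨ee, hee, Set.Subset.antisymm ?_ h1⟩
    intro y hy
    have hgy : g1 y ∈ (e : Set V) := by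
      rw [hEq]
      exact h2 ⟨y, hy, rfl⟩
    exact ⟨g1 y, hgy, hf1g1 y⟩
  have fwd_f := fwd _ _ hgf hfg keyf keyg
  have fwd_g := fwd _ _ hfg hgf keyg keyf
  have hcompgf : ∀ A : Set V, dirf hsimp hlf hs φ.symm '' (dirf hsimp hlf hs φ '' A) = A := by
    intro A
    rw [Set.image_image]
    simp only [hgf]
    simp
  have hiso : IsIsoHG E E (dirf hsimp hlf hs φ) := by
    refine ⟨⟨hinjf, fun v => ⟨dirf hsimp hlf hs φ.symm v, hfg v⟩⟩, fun e => ⟨fun he => ?_, ?_⟩⟩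
    · obtain ⟨ee, hee, heq⟩ := fwd_f e he
      exact ⟨ee, hee, heq⟩
    · rintro ⟨e', he', heq⟩
      obtain ⟨ee, hee, heq2⟩ := fwd_g e' he'
      have hfin : (ee : Set V) = (e : Set V) := by
        rw [heq2, heq, hcompgf]
      have hee' : ee = e := Finset.coe_injective hfin
      exact hee' ▸ hee
  have hid : ∀ v, dirf hsimp hlf hs φ v = v := hasym _ hiso
  have himg : ∀ A : Set V, dirf hsimp hlf hs φ '' A = A := by
    intro A
    simp only [hid]
    simp
  -- the shift set is empty
  have hDempty : s ∆ (φ (s0 hs)).1.1 = ∅ := by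
    by_contra hne
    obtain ⟨v, hvD⟩ := Set.nonempty_iff_ne_empty.mpr hne
    obtain ⟨e, he, hv⟩ := hni v
    have hNfin : {w | ∃ u ∈ (e : Set V), Nbr E u w}.Finite := by
      have hsub : {w | ∃ u ∈ (e : Set V), Nbr E u w} ⊆ ⋃ u ∈ (e : Set V), {w | Nbr E u w} := by
        rintro w ⟨u, hu, hw⟩
        exact Set.mem_biUnion hu hw
      exact (Set.Finite.biUnion e.finite_toSet (fun u _ => nbrFin hlf u)).subset hsub
    have hfinD : (s ∆ (φ (s0 hs)).1.1).Finite := (φ (s0 hs)).2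
    have hIt : Indep E (((e : Set V) \ (s ∆ (φ (s0 hs)).1.1)) ∪
        (s \ ({w | ∃ u ∈ (e : Set V), Nbr E u w} ∪ (s ∆ (φ (s0 hs)).1.1)))) := by
      intro e' he' hsub
      by_cases hmeet : ((e' : Set V) ∩ ((e : Set V) \ (s ∆ (φ (s0 hs)).1.1))).Nonempty
      · obtain ⟨w, hw⟩ := hmeet
        have hNe' : (e' : Set V) ⊆ {w | ∃ u ∈ (e : Set V), Nbr E u w} :=
          fun z hz => ⟨w, hw.2.1, e', he', hw.1, hz⟩
        have hsubF : (e' : Set V) ⊆ (e : Set V) \ (s ∆ (φ (s0 hs)).1.1) := by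
          intro z hz
          rcases hsub hz with h | h
          · exact h
          · exact absurd (Set.mem_union_left _ (hNe' hz)) h.2
        have hee : e' = e :=
          hsimp.2 e' he' e he (Finset.coe_subset.mp (hsubF.trans Set.diff_subset))
        subst hee
        exact (hsubF (Finset.mem_coe.mpr hv)).2 hvD
      · have hss : (e' : Set V) ⊆ s := by
          intro z hz
          rcases hsub hz with h | h
          · exact absurd ⟨z, Set.mem_inter hz h⟩ hmeet
          · exact h.1
        exact hs e' he' hss
    have hft : (s ∆ (((e : Set V) \ (s ∆ (φ (s0 hs)).1.1)) ∪
        (s \ ({w | ∃ u ∈ (e : Set V), Nbr E u w} ∪ (s ∆ (φ (s0 hs)).1.1))))).Finite := by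
      refine ((e.finite_toSet.union ((hNfin.union hfinD).subset
        (Set.inter_subset_right (s := s))))).subset ?_
      intro z hz
      rcases Set.mem_symmDiff.mp hz with ⟨h1, h2⟩ | ⟨h1, h2⟩
      · right
        refine ⟨h1, ?_⟩
        by_contra hzN
        exact h2 (Set.mem_union_right _ ⟨h1, hzN⟩)
      · left
        rcases h1 with h | h
        · exact h.1
        · exact absurd h.1 h2
    have hform := formula φ hsimp hlf hs hinjf (el _ hIt hft) (s0 hs)
    rw [D2_def, himg] at hform
    have hcar : (φ (el _ hIt hft)).1.1
        = ((el _ hIt hft : ↥(Comp E s)).1.1 ∆ (s0 hs : ↥(Comp E s)).1.1)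
          ∆ (φ (s0 hs)).1.1 := by
      rw [← hform, symmDiff_symmDiff_cancel_right]
    refine (φ (el _ hIt hft)).1.2 e he ?_
    rw [hcar]
    intro z hz
    have hzt1 : z ∉ (s ∆ (φ (s0 hs)).1.1) →
        z ∈ (el _ hIt hft : ↥(Comp E s)).1.1 :=
      fun h => Set.mem_union_left _ ((Set.mem_diff _).mpr ⟨hz, h⟩)
    have hzt2 : z ∈ (s ∆ (φ (s0 hs)).1.1) →
        z ∉ (el _ hIt hft : ↥(Comp E s)).1.1 := by
      intro hD ht
      rcases ht with h | h
      · exact h.2 hD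
      · exact h.2 (Set.mem_union_right _ hD)
    have hDm := Set.mem_symmDiff (a := z) (s := s) (t := (φ (s0 hs)).1.1)
    have hs0c : (s0 hs : ↥(Comp E s)).1.1 = s := rfl
    rw [hs0c]
    simp only [Set.mem_symmDiff]
    by_cases hzD : z ∈ s ∆ (φ (s0 hs)).1.1
    · have hzt := hzt2 hzD
      rw [hDm] at hzD
      tauto
    · have hzt := hzt1 hzD
      rw [hDm] at hzD
      push_neg at hzD
      tauto
  -- conclude
  have hform := formula φ hsimp hlf hs hinjf x (s0 hs)
  rw [D2_def, himg] at hform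
  have hS : (φ (s0 hs)).1.1 = s := by
    have hbot : s ∆ (φ (s0 hs)).1.1 = ⊥ := hDempty
    exact (symmDiff_eq_bot.mp hbot).symm
  have hcar : (φ x).1.1 = ((x.1.1 ∆ (s0 hs : ↥(Comp E s)).1.1)) ∆ (φ (s0 hs)).1.1 := by
    rw [← hform, symmDiff_symmDiff_cancel_right]
  have hs0c : (s0 hs : ↥(Comp E s)).1.1 = s := rfl
  rw [hs0c, hS, symmDiff_symmDiff_cancel_right] at hcar
  exact eq_of_carrier hcar
end

section
/- Let G be a simple, locally finite hypergraph with no isolated vertices and no nontrivial automorphism. If Γ_G(s) and Γ_G(t) are isomorphic connected components of Γ_G, then they are equal (i.e., s and t have finite symmetric difference). -/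
set_option maxHeartbeats 800000


open scoped symmDiff

variable {V : Type*}

set_option maxHeartbeats 800000

lemma sd_mem {A B : Set V} {z : V} : z ∈ A ∆ B ↔ (z ∈ A ∧ z ∉ B) ∨ (z ∈ B ∧ z ∉ A) :=
  Set.mem_symmDiff

lemma sd_insert {A : Set V} {v : V} (h : v ∉ A) : (insert v A) ∆ A = {v} := by
  ext z; simp only [sd_mem, Set.mem_insert_iff, Set.mem_singleton_iff]
  constructor
  · rintro (⟨h1, h2⟩ | ⟨h1, h2⟩) <;> tauto
  · rintro rfl; tauto

lemma sd_insert' {A : Set V} {v : V} (h : v ∉ A) : A ∆ (insert v A) = {v} := by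
  rw [symmDiff_comm]; exact sd_insert h

lemma sd_remove {A : Set V} {w : V} (h : w ∈ A) : A ∆ (A \ {w}) = {w} := by
  ext z; simp only [sd_mem, Set.mem_diff, Set.mem_singleton_iff]
  constructor
  · rintro (⟨h1, h2⟩ | ⟨⟨h1, h2⟩, h3⟩) <;> tauto
  · rintro rfl; tauto

lemma sd_cancel {A B C : Set V} (h : A ∆ B = A ∆ C) : B = C := by
  have := congrArg (fun X => A ∆ X) h
  simpa [symmDiff_symmDiff_cancel_left] using this

lemma sd_cancel' {A B C : Set V} (h : A ∆ C = B ∆ C) : A = B := by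
  rw [symmDiff_comm A C, symmDiff_comm B C] at h; exact sd_cancel h

lemma sd_four {A B C D : Set V} : (A ∆ B) ∆ (C ∆ D) = (A ∆ C) ∆ (B ∆ D) := by
  ext z; simp only [sd_mem]; tauto

lemma sd_singleton_eq {v w : V} (h : ({v} : Set V) = {w}) : v = w := by
  have := h ▸ Set.mem_singleton v
  simpa using this

lemma sd_cases {A B : Set V} {v : V} (h : A ∆ B = {v}) :
    (v ∉ A ∧ B = insert v A) ∨ (v ∉ B ∧ A = insert v B) := by
  have hv : v ∈ A ∆ B := h ▸ rfl
  rw [sd_mem] at hv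
  rcases hv with ⟨h1, h2⟩ | ⟨h1, h2⟩
  · right; refine ⟨h2, ?_⟩
    ext z; simp only [Set.mem_insert_iff]
    constructor
    · intro hz; by_cases hzB : z ∈ B
      · right; exact hzB
      · left; have : z ∈ A ∆ B := sd_mem.2 (Or.inl ⟨hz, hzB⟩)
        rw [h] at this; exact this
    · rintro (rfl | hz)
      · exact h1
      · by_contra hzA
        have : z ∈ A ∆ B := sd_mem.2 (Or.inr ⟨hz, hzA⟩)
        rw [h] at this
        exact h2 (this ▸ hz)
  · left; refine ⟨h2, ?_⟩
    ext z; simp only [Set.mem_insert_iff]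
    constructor
    · intro hz; by_cases hzA : z ∈ A
      · right; exact hzA
      · left; have : z ∈ A ∆ B := sd_mem.2 (Or.inr ⟨hz, hzA⟩)
        rw [h] at this; exact this
    · rintro (rfl | hz)
      · exact h1
      · by_contra hzB
        have : z ∈ A ∆ B := sd_mem.2 (Or.inl ⟨hz, hzB⟩)
        rw [h] at this
        exact h2 (this ▸ hz)

lemma sd_fin_trans {A B C : Set V} (h1 : (A ∆ B).Finite) (h2 : (A ∆ C).Finite) :
    (B ∆ C).Finite := by
  have h1' : (B ∆ A).Finite := by rw [symmDiff_comm]; exact h1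
  have : B ∆ C ⊆ (B ∆ A) ∪ (A ∆ C) := symmDiff_triangle B A C
  exact (h1'.union h2).subset this

-- square lemma
lemma square {A A' B B' : Set V} {p q m r : V} (hA : A ∆ A' = {p}) (hB : B ∆ B' = {q})
    (hm : A' ∆ B' = {m}) (hr : A ∆ B = {r}) (h1 : A ≠ B') (h2 : A' ≠ B) :
    r = m ∧ m ∉ B ∆ B' := by
  have key : ({r} : Set V) ∆ {m} = {p} ∆ {q} := by
    rw [← hA, ← hB, ← hm, ← hr]; exact sd_four
  by_cases hpq : p = q
  · subst hpq
    have hrm : r = m := by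
      by_contra hne
      have : r ∈ ({r} : Set V) ∆ {m} := sd_mem.2 (Or.inl ⟨rfl, by simpa using hne⟩)
      rw [key, symmDiff_self] at this; exact this
    have hmq : m ≠ p := by
      rintro rfl
      exact h2 (sd_cancel' (hm.trans hB.symm))
    exact ⟨hrm, by rw [hB]; simpa using hmq⟩
  · exfalso
    have hp : p ∈ ({r} : Set V) ∆ {m} := by
      rw [key, sd_mem]; left; simpa using hpq
    rw [sd_mem] at hp
    rcases hp with ⟨hp1, _⟩ | ⟨hp1, _⟩
    · rw [Set.mem_singleton_iff] at hp1; subst hp1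
      exact h2 (sd_cancel (hA.trans hr.symm))
    · rw [Set.mem_singleton_iff] at hp1; subst hp1
      have : A' ∆ B' = A' ∆ A := hm.trans (by rw [symmDiff_comm]; exact hA.symm)
      exact h1 (sd_cancel this).symm

lemma sd_solve {A B C : Set V} (h : A ∆ B = C) : A = B ∆ C := by
  rw [← h, symmDiff_comm A B, symmDiff_symmDiff_cancel_left]

lemma sd_eq_empty {A B : Set V} (h : A ∆ B = ∅) : A = B :=
  symmDiff_eq_bot.mp (Set.bot_eq_empty ▸ h)

lemma sd_mem_right {A B : Set V} {v : V} (h : A ∆ B = {v}) (hv : v ∈ A) :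
    B = A \ {v} ∧ v ∉ B := by
  rcases sd_cases h with ⟨h1, _⟩ | ⟨h1, h2⟩
  · exact absurd hv h1
  · refine ⟨?_, h1⟩
    rw [h2]
    exact (Set.insert_diff_self_of_notMem h1).symm

lemma common {P Q R S : Set V} {α β γ δ : V} (hPQ : P ∆ Q = {α}) (hPR : P ∆ R = {β})
    (hab : α ≠ β) (hSQ : S ∆ Q = {γ}) (hSR : S ∆ R = {δ}) (hSP : S ≠ P) :
    S = (P ∆ {α}) ∆ {β} := by
  have hQR : Q ∆ R = ({α} : Set V) ∆ {β} := by
    have h1 : (P ∆ Q) ∆ (P ∆ R) = Q ∆ R := by ext z; simp only [sd_mem]; tauto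
    rw [← h1, hPQ, hPR]
  have hQR' : Q ∆ R = ({γ} : Set V) ∆ {δ} := by
    have h1 : (S ∆ Q) ∆ (S ∆ R) = Q ∆ R := by ext z; simp only [sd_mem]; tauto
    rw [← h1, hSQ, hSR]
  have hgd : ({γ} : Set V) ∆ {δ} = {α} ∆ {β} := by rw [← hQR', hQR]
  have hga : γ ≠ α := by
    rintro rfl
    exact hSP (sd_cancel' (hSQ.trans hPQ.symm))
  have hα : α ∈ ({γ} : Set V) ∆ {δ} := by
    rw [hgd, sd_mem]; left; exact ⟨rfl, by simpa using hab⟩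
  rw [sd_mem] at hα
  rcases hα with ⟨h1, _⟩ | ⟨h1, _⟩
  · exact absurd (by simpa using h1 : α = γ).symm hga
  · have hδ : δ = α := (by simpa using h1 : α = δ).symm
    have hS : S = R ∆ {α} := sd_solve (by rw [hSR, hδ])
    have hR : R = P ∆ {β} := sd_solve (symmDiff_comm R P ▸ hPR)
    rw [hS, hR, symmDiff_assoc, symmDiff_assoc, symmDiff_comm ({β} : Set V) {α}]

lemma sd_pair {A B C : Set V} : (A ∆ B) ∆ (A ∆ C) = B ∆ C := by
  ext z; simp only [sd_mem] <;> tauto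

lemma sd_XB1 {A : Set V} {p q : V} (hp : p ∈ A) (hq : q ∈ A) (hpq : p ≠ q) :
    ((A \ {q}) \ {p}) ∆ (A \ {p}) = {q} := by
  ext z
  simp only [sd_mem, Set.mem_diff, Set.mem_singleton_iff]
  by_cases hz1 : z = p
  · subst hz1; simp [hp, hpq] <;> tauto
  · by_cases hz2 : z = q
    · subst hz2; simp [hq, hz1] <;> tauto
    · simp [hz1, hz2] <;> tauto

lemma sd_XB2 {A : Set V} {p q : V} (hp : p ∈ A) (hq : q ∉ A) (hpq : p ≠ q) :
    ((insert q A) \ {p}) ∆ (A \ {p}) = {q} := by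
  ext z
  simp only [sd_mem, Set.mem_diff, Set.mem_insert_iff, Set.mem_singleton_iff]
  by_cases hz1 : z = p
  · subst hz1; simp [hp, hpq] <;> tauto
  · by_cases hz2 : z = q
    · subst hz2; simp [hq, hz1] <;> tauto
    · simp [hz1, hz2] <;> tauto

lemma sd_final {A : Set V} {p q : V} (hp : p ∉ A) (hq : q ∉ A) (hpq : p ≠ q) :
    (A ∆ {p}) ∆ {q} = insert p (insert q A) := by
  ext z
  simp only [sd_mem, Set.mem_insert_iff, Set.mem_singleton_iff]
  by_cases hz1 : z = p
  · subst hz1; simp [hp, hpq]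
  · by_cases hz2 : z = q
    · subst hz2; simp [hq, hz1] <;> tauto
    · simp [hz1, hz2] <;> tauto
-- hypergraph lemmas, to be appended after prelude
variable {E : Set (Finset V)} {s : Set V} {v : V}

lemma indep_mono {a b : Set V} (h : a ⊆ b) (hb : Indep E b) : Indep E a :=
  fun e he hsub => hb e he (hsub.trans h)

lemma not_indep_iff {a : Set V} : ¬ Indep E a ↔ ∃ e ∈ E, (e : Set V) ⊆ a := by
  simp [Indep]

lemma nbr_self {e : Finset V} (he : e ∈ E) (hv : v ∈ e) : Nbr E v v := ⟨e, he, hv, hv⟩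

lemma nbr_finite (hlf : LocFin E) (v : V) : {w | Nbr E v w}.Finite := by
  have hsub : {w | Nbr E v w} ⊆ ⋃ e ∈ {e ∈ E | v ∈ e}, (e : Set V) := by
    rintro w ⟨e, he, hv, hw⟩
    exact Set.mem_biUnion ⟨he, hv⟩ hw
  exact ((hlf v).biUnion (fun e _ => e.finite_toSet)).subset hsub

lemma xset_subset : xset E s v ⊆ s := Set.diff_subset

lemma not_mem_xset : v ∉ xset E s v := fun h => h.2 (Set.mem_insert _ _)

lemma xset_indep (hs : Indep E s) : Indep E (xset E s v) := indep_mono xset_subset hs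

lemma yset_indep (hsimp : SimpleHG E) (hs : Indep E s) : Indep E (yset E s v) := by
  intro e he hsub
  by_cases hv : v ∈ (e : Set V)
  · have hcard : (e : Set V) ⊆ {v} := by
      intro z hz
      rcases hsub hz with rfl | hz'
      · rfl
      · exact absurd (Or.inr ⟨e, he, hv, hz⟩ : z = v ∨ Nbr E v z)
          (by simpa [Set.mem_insert_iff] using hz'.2)
    have : e ⊆ {v} := by
      intro z hz; simpa using hcard hz
    have hle := Finset.card_le_card this
    have h1 := hsimp.1 e he
    simp [Finset.card_singleton] at hle
    omega
  · refine hs e he (fun z hz => ?_)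
    rcases hsub hz with rfl | hz'
    · exact absurd hz hv
    · exact hz'.1

lemma s_sd_xset_finite (hlf : LocFin E) : (s ∆ xset E s v).Finite := by
  have : s ∆ xset E s v ⊆ insert v {w | Nbr E v w} := by
    intro z hz
    rcases sd_mem.1 hz with ⟨h1, h2⟩ | ⟨h1, h2⟩
    · by_contra hN
      exact h2 ⟨h1, hN⟩
    · exact absurd h1.1 h2
  exact (((nbr_finite hlf v).insert v).subset this)

lemma s_sd_yset_finite (hlf : LocFin E) : (s ∆ yset E s v).Finite := by
  have : s ∆ yset E s v ⊆ insert v {w | Nbr E v w} := by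
    intro z hz
    rcases sd_mem.1 hz with ⟨h1, h2⟩ | ⟨h1, h2⟩
    · by_contra hN
      exact h2 (Or.inr ⟨h1, hN⟩)
    · rcases h1 with rfl | h1
      · exact Set.mem_insert _ _
      · exact absurd h1.1 h2
  exact (((nbr_finite hlf v).insert v).subset this)

lemma xset_sd_yset : xset E s v ∆ yset E s v = {v} := sd_insert' not_mem_xset

-- vertex infrastructure
def vmk (a : Set V) (h1 : Indep E a) (h2 : (s ∆ a).Finite) : Comp E s := ⟨⟨a, h1⟩, h2⟩

lemma vext {a b : Comp E s} (h : a.1.1 = b.1.1) : a = b := Subtype.ext (Subtype.ext h)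

lemma vne {a b : Comp E s} (h : a.1.1 ≠ b.1.1) : a ≠ b := fun hab => h (by rw [hab])

lemma vfin (a : Comp E s) : (s ∆ a.1.1).Finite := a.2

lemma vindep (a : Comp E s) : Indep E a.1.1 := a.1.2

lemma adj_iff {a b : Comp E s} : (GammaComp E s).Adj a b ↔ ∃ w, a.1.1 ∆ b.1.1 = {w} := by
  unfold GammaComp Gamma; exact Iff.rfl
-- appended after hg part
lemma sd_notmem {A B : Set V} {z : V} (h : z ∉ A ∆ B) : z ∈ A ↔ z ∈ B := by
  rw [sd_mem] at h; push_neg at h; tauto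

noncomputable def Xv (E : Set (Finset V)) (s : Set V) (hs : Indep E s) (hlf : LocFin E)
    (v : V) : Comp E s := vmk (xset E s v) (xset_indep hs) (s_sd_xset_finite hlf)

noncomputable def Yv (E : Set (Finset V)) (s : Set V) (hsimp : SimpleHG E) (hs : Indep E s)
    (hlf : LocFin E) (v : V) : Comp E s :=
  vmk (yset E s v) (yset_indep hsimp hs) (s_sd_yset_finite hlf)

lemma master (hsimp : SimpleHG E) (hlf : LocFin E) (hni : ∀ v : V, ∃ e ∈ E, v ∈ e)
    {s t : Set V} (hs : Indep E s) (ht : Indep E t)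
    (φ : GammaComp E s ≃g GammaComp E t) :
    ∃ f : V → V,
      (∀ (a b : Comp E s) (v : V), a.1.1 ∆ b.1.1 = {v} →
        (φ a).1.1 ∆ (φ b).1.1 = {f v}) ∧
      (∀ (a : Comp E s) (v : V), v ∈ a.1.1 → f v ∈ (φ a).1.1) := by
  classical
  have himg : ∀ (a b : Comp E s) (w : V), a.1.1 ∆ b.1.1 = {w} →
      ∃ u, (φ a).1.1 ∆ (φ b).1.1 = {u} := by
    intro a b w h
    exact (φ.map_adj_iff.2 (adj_iff.2 ⟨w, h⟩ : (GammaComp E s).Adj a b) : (GammaComp E t).Adj (φ a) (φ b))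
  have hXY : ∀ v : V, (Xv E s hs hlf v).1.1 ∆ (Yv E s hsimp hs hlf v).1.1 = {v} :=
    fun v => xset_sd_yset
  choose f hf using fun v => himg _ _ v (hXY v)
  have hsdfin : ∀ (a : Comp E s) (v : V), (a.1.1 ∆ xset E s v).Finite := fun a v =>
    sd_fin_trans a.2 (s_sd_xset_finite hlf)
  -- core transport lemma
  have core : ∀ (n : ℕ) (a b : Comp E s) (v : V), v ∉ a.1.1 → b.1.1 = insert v a.1.1 →
      (a.1.1 ∆ xset E s v).ncard = n →
      (φ a).1.1 ∆ (φ b).1.1 = {f v} ∧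
        (f v ∈ (φ b).1.1 ↔ f v ∈ (φ (Yv E s hsimp hs hlf v)).1.1) := by
    intro n
    induction n using Nat.strong_induction_on with
    | _ n IH =>
    intro a b v hva hb hn
    by_cases hax : a.1.1 = xset E s v
    · have ha : a = Xv E s hs hlf v := vext hax
      have hbY : b = Yv E s hsimp hs hlf v := vext (by rw [hb, hax]; rfl)
      rw [ha, hbY]
      exact ⟨hf v, Iff.rfl⟩
    · have hvb : v ∈ b.1.1 := by rw [hb]; exact Set.mem_insert _ _
      have hab : a.1.1 ∆ b.1.1 = {v} := by rw [hb]; exact sd_insert' hva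
      by_cases hw : ∃ w, w ∈ a.1.1 \ xset E s v
      · -- removal step
        obtain ⟨w, hwa, hwx⟩ := hw
        have hwv : w ≠ v := fun h => hva (h ▸ hwa)
        have haf : (a.1.1 ∆ (a.1.1 \ {w})).Finite := by
          rw [sd_remove hwa]; exact Set.finite_singleton w
        have ha'f : (s ∆ (a.1.1 \ {w})).Finite :=
          sd_fin_trans ((by rw [symmDiff_comm]; exact vfin a : (a.1.1 ∆ s).Finite)) haf
        set a' : Comp E s := vmk (a.1.1 \ {w}) (indep_mono Set.diff_subset (vindep a)) ha'f
          with ha'def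
        have hb'eq : insert v (a.1.1 \ {w}) = b.1.1 \ {w} := by
          rw [hb]; ext z
          simp only [Set.mem_insert_iff, Set.mem_diff, Set.mem_singleton_iff]
          constructor
          · rintro (rfl | ⟨h1, h2⟩)
            · exact ⟨Or.inl rfl, fun h => hwv h.symm⟩
            · exact ⟨Or.inr h1, h2⟩
          · rintro ⟨(rfl | h1), h2⟩
            · exact Or.inl rfl
            · exact Or.inr ⟨h1, h2⟩
        have hb'i : Indep E (insert v (a.1.1 \ {w})) := by
          rw [hb'eq]; exact indep_mono Set.diff_subset (vindep b)
        have hb'f : (s ∆ insert v (a.1.1 \ {w})).Finite := by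
          rw [hb'eq]
          refine sd_fin_trans ((by rw [symmDiff_comm]; exact vfin b : (b.1.1 ∆ s).Finite)) ?_
          rw [sd_remove (hb ▸ Set.mem_insert_iff.2 (Or.inr hwa) : w ∈ b.1.1)]
          exact Set.finite_singleton w
        set b' : Comp E s := vmk (insert v (a.1.1 \ {w})) hb'i hb'f with hb'def
        have hAA' : a.1.1 ∆ a'.1.1 = {w} := sd_remove hwa
        have hBB' : b.1.1 ∆ b'.1.1 = {w} := by
          show b.1.1 ∆ (insert v (a.1.1 \ {w})) = {w}
          rw [hb'eq]
          exact sd_remove (hb ▸ Set.mem_insert_iff.2 (Or.inr hwa))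
        have hcard : a'.1.1 ∆ xset E s v = (a.1.1 ∆ xset E s v) \ {w} := by
          show (a.1.1 \ {w}) ∆ xset E s v = _
          ext z
          simp only [sd_mem, Set.mem_diff, Set.mem_singleton_iff]
          by_cases hzw : z = w
          · subst hzw; simp [hwa, hwx]
          · constructor
            · rintro (⟨⟨h1, _⟩, h2⟩ | ⟨h1, h2⟩)
              · exact ⟨Or.inl ⟨h1, h2⟩, hzw⟩
              · exact ⟨Or.inr ⟨h1, fun hz => h2 ⟨hz, hzw⟩⟩, hzw⟩
            · rintro ⟨(⟨h1, h2⟩ | ⟨h1, h2⟩), _⟩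
              · exact Or.inl ⟨⟨h1, hzw⟩, h2⟩
              · exact Or.inr ⟨h1, fun hz => h2 hz.1⟩
        have hlt : (a'.1.1 ∆ xset E s v).ncard < n := by
          rw [hcard, ← hn]
          exact Set.ncard_diff_singleton_lt_of_mem
            (sd_mem.2 (Or.inl ⟨hwa, hwx⟩)) (hsdfin a v)
        obtain ⟨h1, h2⟩ := IH _ hlt a' b' v (fun h => hva h.1) rfl rfl
        have hne1 : (φ a).1.1 ≠ (φ b').1.1 := by
          intro hEq
          have : a = b' := φ.injective (vext hEq)
          exact hva (by rw [show a.1.1 = b'.1.1 from congrArg (fun x => x.1.1) this]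
                        exact Set.mem_insert _ _)
        have hne2 : (φ a').1.1 ≠ (φ b).1.1 := by
          intro hEq
          have : a' = b := φ.injective (vext hEq)
          exact (fun h : v ∈ a'.1.1 => hva h.1)
            (by rw [show a'.1.1 = b.1.1 from congrArg (fun x => x.1.1) this]; exact hvb)
        obtain ⟨p, hp⟩ := himg a a' w hAA'
        obtain ⟨q, hq⟩ := himg b b' w hBB'
        obtain ⟨r, hr⟩ := himg a b v hab
        obtain ⟨hrm, hnm⟩ := square hp hq h1 hr hne1 hne2
        exact ⟨hrm ▸ hr, (sd_notmem hnm).trans h2⟩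
      · -- addition step
        push_neg at hw
        have hsub : a.1.1 ⊆ xset E s v := fun z hz => by
          by_contra hz'; exact hw z ⟨hz, hz'⟩
        have hex : ∃ w, w ∈ xset E s v \ a.1.1 := by
          by_contra h'
          push_neg at h'
          exact hax (Set.Subset.antisymm hsub (fun z hz => by
            by_contra hz'; exact h' z ⟨hz, hz'⟩))
        obtain ⟨w, hwx, hwa⟩ := hex
        have hwv : w ≠ v := fun h => not_mem_xset (h ▸ hwx)
        have ha'i : Indep E (insert w a.1.1) :=
          indep_mono (Set.insert_subset hwx hsub) (xset_indep hs)
        have ha'f : (s ∆ insert w a.1.1).Finite := by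
          refine sd_fin_trans ((by rw [symmDiff_comm]; exact vfin a : (a.1.1 ∆ s).Finite)) ?_
          rw [sd_insert' hwa]; exact Set.finite_singleton w
        set a' : Comp E s := vmk (insert w a.1.1) ha'i ha'f with ha'def
        have hb'eq : insert v (insert w a.1.1) = insert w b.1.1 := by
          rw [hb]; exact Set.insert_comm v w a.1.1
        have hwb : w ∉ b.1.1 := by
          rw [hb]; rintro (rfl | h)
          · exact hwv rfl
          · exact hwa h
        have hb'i : Indep E (insert v (insert w a.1.1)) := by
          refine indep_mono ?_ (yset_indep hsimp hs (v := v))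
          refine Set.insert_subset (Set.mem_insert _ _) ?_
          exact (Set.insert_subset (Set.mem_insert_iff.2 (Or.inr hwx)) 
            (fun z hz => Set.mem_insert_iff.2 (Or.inr (hsub hz))))
        have hb'f : (s ∆ insert v (insert w a.1.1)).Finite := by
          rw [hb'eq]
          refine sd_fin_trans ((by rw [symmDiff_comm]; exact vfin b : (b.1.1 ∆ s).Finite)) ?_
          rw [sd_insert' hwb]; exact Set.finite_singleton w
        set b' : Comp E s := vmk (insert v (insert w a.1.1)) hb'i hb'f with hb'def
        have hAA' : a.1.1 ∆ a'.1.1 = {w} := sd_insert' hwa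
        have hBB' : b.1.1 ∆ b'.1.1 = {w} := by
          show b.1.1 ∆ (insert v (insert w a.1.1)) = {w}
          rw [hb'eq]
          exact sd_insert' hwb
        have hva' : v ∉ a'.1.1 := by
          rintro (rfl | h)
          · exact hwv rfl
          · exact hva h
        have hcard : a'.1.1 ∆ xset E s v = (a.1.1 ∆ xset E s v) \ {w} := by
          show (insert w a.1.1) ∆ xset E s v = _
          ext z
          simp only [sd_mem, Set.mem_insert_iff, Set.mem_diff, Set.mem_singleton_iff]
          by_cases hzw : z = w
          · subst hzw; simp [hwa, hwx]
          · constructor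
            · rintro (⟨(rfl | h1), h2⟩ | ⟨h1, h2⟩)
              · exact absurd rfl hzw
              · exact ⟨Or.inl ⟨h1, h2⟩, hzw⟩
              · exact ⟨Or.inr ⟨h1, fun hz => h2 (Or.inr hz)⟩, hzw⟩
            · rintro ⟨(⟨h1, h2⟩ | ⟨h1, h2⟩), _⟩
              · exact Or.inl ⟨Or.inr h1, h2⟩
              · exact Or.inr ⟨h1, fun hz => by
                  rcases hz with rfl | hz
                  · exact hzw rfl
                  · exact h2 hz⟩
        have hlt : (a'.1.1 ∆ xset E s v).ncard < n := by
          rw [hcard, ← hn]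
          exact Set.ncard_diff_singleton_lt_of_mem
            (sd_mem.2 (Or.inr ⟨hwx, hwa⟩)) (hsdfin a v)
        obtain ⟨h1, h2⟩ := IH _ hlt a' b' v hva' rfl rfl
        have hne1 : (φ a).1.1 ≠ (φ b').1.1 := by
          intro hEq
          have : a = b' := φ.injective (vext hEq)
          exact hva (by rw [show a.1.1 = b'.1.1 from congrArg (fun x => x.1.1) this]
                        exact Set.mem_insert _ _)
        have hne2 : (φ a').1.1 ≠ (φ b).1.1 := by
          intro hEq
          have : a' = b := φ.injective (vext hEq)
          exact hva' (by rw [show a'.1.1 = b.1.1 from congrArg (fun x => x.1.1) this]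
                         exact hvb)
        obtain ⟨p, hp⟩ := himg a a' w hAA'
        obtain ⟨q, hq⟩ := himg b b' w hBB'
        obtain ⟨r, hr⟩ := himg a b v hab
        obtain ⟨hrm, hnm⟩ := square hp hq h1 hr hne1 hne2
        exact ⟨hrm ▸ hr, (sd_notmem hnm).trans h2⟩
  -- positivity: f v lands on the positive side
  have pos : ∀ v : V, f v ∈ (φ (Yv E s hsimp hs hlf v)).1.1 := by
    intro v
    obtain ⟨e, he, hv⟩ := hni v
    obtain ⟨w, hwe, hwv⟩ := Finset.exists_mem_ne (hsimp.1 e he) v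
    have hvw : v ≠ w := fun h => hwv h.symm
    set N : Set V := ⋃ u ∈ (e : Set V), {z | Nbr E u z} with hNdef
    have hNfin : N.Finite := e.finite_toSet.biUnion (fun u _ => nbr_finite hlf u)
    set a0 : Set V := (s \ N) ∪ ((e : Set V) \ {v, w}) with ha0def
    have hvN : v ∈ N := Set.mem_biUnion hv (nbr_self he hv)
    have hwN : w ∈ N := Set.mem_biUnion hwe (nbr_self he hwe)
    have hva : v ∉ a0 := by
      rintro (⟨_, h⟩ | ⟨_, h⟩)
      · exact h hvN
      · exact h (Or.inl rfl)
    have hwa : w ∉ a0 := by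
      rintro (⟨_, h⟩ | ⟨_, h⟩)
      · exact h hwN
      · exact h (Or.inr rfl)
    have ha : Indep E a0 := by
      intro e'' he'' hsub
      by_cases hint : ∃ u, u ∈ (e'' : Set V) ∩ ((e : Set V) \ {v, w})
      · obtain ⟨u, hu'', hue, _⟩ := hint
        have hsubE : (e'' : Set V) ⊆ (e : Set V) \ {v, w} := by
          intro z hz
          rcases hsub hz with ⟨_, hzN⟩ | hz2
          · exact absurd (Set.mem_biUnion hue (⟨e'', he'', Finset.mem_coe.1 hu'', Finset.mem_coe.1 hz⟩ : Nbr E u z)) hzN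
          · exact hz2
        have hss : e'' ⊆ e := fun z hz => (hsubE hz).1
        have he''e : e'' = e := hsimp.2 e'' he'' e he hss
        exact (hsubE (by rw [he''e]; exact Finset.mem_coe.2 hv)).2 (Or.inl rfl)
      · push_neg at hint
        refine hs e'' he'' (fun z hz => ?_)
        rcases hsub hz with ⟨hz1, _⟩ | hz2
        · exact hz1
        · exact absurd (Set.mem_inter hz hz2) (hint z)
    have hav : Indep E (insert v a0) := by
      intro e'' he'' hsub
      by_cases hv'' : v ∈ (e'' : Set V)
      · have hsubE : (e'' : Set V) ⊆ insert v ((e : Set V) \ {v, w}) := by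
          intro z hz
          rcases hsub hz with rfl | hza
          · exact Set.mem_insert _ _
          · have hnbr : Nbr E v z := ⟨e'', he'', Finset.mem_coe.1 hv'', Finset.mem_coe.1 hz⟩
            rcases hza with ⟨_, hzN⟩ | hz2
            · exact absurd (Set.mem_biUnion hv hnbr) hzN
            · exact Set.mem_insert_of_mem _ hz2
        have hss : e'' ⊆ e := by
          intro z hz
          rcases hsubE (Finset.mem_coe.2 hz) with h | h
          · rw [h]; exact hv
          · exact h.1
        have he''e : e'' = e := hsimp.2 e'' he'' e he hss
        have hw'' : w ∈ (e'' : Set V) := by rw [he''e]; exact Finset.mem_coe.2 hwe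
        rcases hsub hw'' with h | h
        · exact hwv h
        · exact hwa h
      · refine ha e'' he'' (fun z hz => ?_)
        rcases hsub hz with rfl | h
        · exact absurd hz hv''
        · exact h
    have haw : Indep E (insert w a0) := by
      intro e'' he'' hsub
      by_cases hw'' : w ∈ (e'' : Set V)
      · have hsubE : (e'' : Set V) ⊆ insert w ((e : Set V) \ {v, w}) := by
          intro z hz
          rcases hsub hz with rfl | hza
          · exact Set.mem_insert _ _
          · have hnbr : Nbr E w z := ⟨e'', he'', Finset.mem_coe.1 hw'', Finset.mem_coe.1 hz⟩
            rcases hza with ⟨_, hzN⟩ | hz2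
            · exact absurd (Set.mem_biUnion hwe hnbr) hzN
            · exact Set.mem_insert_of_mem _ hz2
        have hss : e'' ⊆ e := by
          intro z hz
          rcases hsubE (Finset.mem_coe.2 hz) with h | h
          · rw [h]; exact hwe
          · exact h.1
        have he''e : e'' = e := hsimp.2 e'' he'' e he hss
        have hv'' : v ∈ (e'' : Set V) := by rw [he''e]; exact Finset.mem_coe.2 hv
        rcases hsub hv'' with h | h
        · exact hvw h
        · exact hva h
      · refine ha e'' he'' (fun z hz => ?_)
        rcases hsub hz with rfl | h
        · exact absurd hz hw''
        · exact h
    have hdep : ¬ Indep E (insert v (insert w a0)) := by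
      rw [not_indep_iff]
      refine ⟨e, he, fun z hz => ?_⟩
      by_cases hz1 : z = v
      · rw [hz1]; exact Set.mem_insert _ _
      · by_cases hz2 : z = w
        · rw [hz2]; exact Set.mem_insert_of_mem _ (Set.mem_insert _ _)
        · exact Set.mem_insert_of_mem _ (Set.mem_insert_of_mem _
            (Or.inr ⟨hz, fun h => by rcases h with h | h; exact hz1 h; exact hz2 h⟩))
    have ha0fin : (s ∆ a0).Finite := by
      refine (hNfin.union e.finite_toSet).subset ?_
      intro z hz
      rcases sd_mem.1 hz with ⟨h1, h2⟩ | ⟨h1, h2⟩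
      · by_cases hzN : z ∈ N
        · exact Or.inl hzN
        · exact absurd (Or.inl ⟨h1, hzN⟩) h2
      · rcases h1 with ⟨h1, _⟩ | ⟨h1, _⟩
        · exact absurd h1 h2
        · exact Or.inr h1
    set va : Comp E s := vmk a0 ha ha0fin with hvadef
    have hbfin : (s ∆ insert v a0).Finite := by
      refine sd_fin_trans (A := a0) (by rw [symmDiff_comm]; exact ha0fin) ?_
      rw [sd_insert' hva]; exact Set.finite_singleton v
    have hcfin : (s ∆ insert w a0).Finite := by
      refine sd_fin_trans (A := a0) (by rw [symmDiff_comm]; exact ha0fin) ?_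
      rw [sd_insert' hwa]; exact Set.finite_singleton w
    set vb : Comp E s := vmk (insert v a0) hav hbfin with hvbdef
    set vc : Comp E s := vmk (insert w a0) haw hcfin with hvcdef
    obtain ⟨hAB1, hAB2⟩ := core _ va vb v hva rfl rfl
    obtain ⟨hAC1, _⟩ := core _ va vc w hwa rfl rfl
    have hfvw : f v ≠ f w := by
      intro hEq
      have h4 : (φ vb).1.1 ∆ (φ vc).1.1 = ({f v} : Set V) ∆ {f w} := by
        rw [← hAB1, ← hAC1, sd_pair]
      rw [hEq, symmDiff_self] at h4
      have hbc : vb = vc := φ.injective (vext (sd_eq_empty (by rw [h4]; rfl)))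
      have hEq2 : insert v a0 = insert w a0 := congrArg (fun x => x.1.1) hbc
      have hvv : v ∈ insert w a0 := hEq2 ▸ Set.mem_insert v a0
      rcases hvv with h | h
      · exact hvw h
      · exact hva h
    have hfvA : f v ∉ (φ va).1.1 := by
      intro hfv
      have hfvC : f v ∈ (φ vc).1.1 :=
        (sd_notmem (by rw [hAC1]; simpa using hfvw)).1 hfv
      -- the candidate fourth vertex
      have hXi : Indep E ((φ vc).1.1 \ {f v}) :=
        indep_mono Set.diff_subset (vindep (φ vc))
      have hXfin : (t ∆ ((φ vc).1.1 \ {f v})).Finite := by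
        refine sd_fin_trans (A := (φ vc).1.1) (by rw [symmDiff_comm]; exact vfin (φ vc)) ?_
        rw [sd_remove hfvC]; exact Set.finite_singleton (f v)
      set X : Set V := (φ vc).1.1 \ {f v} with hXdef
      set vx : Comp E t := vmk X hXi hXfin with hvxdef
      have hXC : X ∆ (φ vc).1.1 = {f v} := by rw [symmDiff_comm]; exact sd_remove hfvC
      have hXB : X ∆ (φ vb).1.1 = {f w} := by
        obtain ⟨hBeq, _⟩ := sd_mem_right hAB1 hfv
        by_cases hfw : f w ∈ (φ va).1.1
        · obtain ⟨hCeq, _⟩ := sd_mem_right hAC1 hfw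
          rw [hXdef, hBeq, hCeq]
          exact sd_XB1 hfv hfw hfvw
        · have hCeq : (φ vc).1.1 = insert (f w) (φ va).1.1 := by
            rcases sd_cases hAC1 with ⟨_, h⟩ | ⟨h1, h2⟩
            · exact h
            · exact absurd (h2 ▸ Set.mem_insert _ _) hfw
          rw [hXdef, hBeq, hCeq]
          exact sd_XB2 hfv hfw hfvw
      have hXne : X ≠ (φ va).1.1 := by
        intro h
        rw [← h] at hfv
        exact hfv.2 rfl
      have hadj1 : (GammaComp E t).Adj vx (φ vb) := ⟨f w, hXB⟩
      have hadj2 : (GammaComp E t).Adj vx (φ vc) := ⟨f v, hXC⟩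
      have hS1 : (GammaComp E s).Adj (φ.symm vx) vb := by
        have := φ.symm.map_adj_iff.2 hadj1
        rwa [φ.symm_apply_apply] at this
      have hS2 : (GammaComp E s).Adj (φ.symm vx) vc := by
        have := φ.symm.map_adj_iff.2 hadj2
        rwa [φ.symm_apply_apply] at this
      obtain ⟨γ, hγ⟩ := hS1
      obtain ⟨δ, hδ⟩ := hS2
      have hSP : (φ.symm vx).1.1 ≠ va.1.1 := by
        intro h
        have : vx = φ va := by
          have h2 : φ.symm vx = va := vext h
          rw [← h2, φ.apply_symm_apply]
        exact hXne (congrArg (fun x => x.1.1) this)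
      have hSval : (φ.symm vx).1.1 = (a0 ∆ {v}) ∆ {w} :=
        common (sd_insert' hva) (sd_insert' hwa) hvw hγ hδ hSP
      have hfinal : (a0 ∆ {v}) ∆ {w} = insert v (insert w a0) :=
        sd_final hva hwa hvw
      exact hdep (by rw [← hfinal, ← hSval]; exact vindep (φ.symm vx))
    have : f v ∈ (φ va).1.1 ∆ (φ vb).1.1 := by rw [hAB1]; exact rfl
    rcases sd_mem.1 this with ⟨h1, _⟩ | ⟨h1, _⟩
    · exact absurd h1 hfvA
    · exact hAB2.1 h1
  refine ⟨f, ?_, ?_⟩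
  · intro a b v hab
    rcases sd_cases hab with ⟨hva, hb⟩ | ⟨hvb, ha⟩
    · exact (core _ a b v hva hb rfl).1
    · have := (core _ b a v hvb ha rfl).1
      rw [symmDiff_comm]; exact this
  · intro a v hv
    have h0i : Indep E (a.1.1 \ {v}) := indep_mono Set.diff_subset (vindep a)
    have h0f : (s ∆ (a.1.1 \ {v})).Finite := by
      refine sd_fin_trans (A := a.1.1) (by rw [symmDiff_comm]; exact vfin a) ?_
      rw [sd_remove hv]; exact Set.finite_singleton v
    have hins : a.1.1 = insert v ((vmk (a.1.1 \ {v}) h0i h0f : Comp E s).1.1) :=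
      ((Set.insert_diff_singleton).trans (Set.insert_eq_self.2 hv)).symm
    obtain ⟨_, h2⟩ := core _ (vmk (a.1.1 \ {v}) h0i h0f) a v (fun h => h.2 rfl) hins rfl
    exact h2.2 (pos v)

lemma etrans (hsimp : SimpleHG E) (hlf : LocFin E)
    {s t : Set V} (hs : Indep E s) (ht : Indep E t)
    (φ : GammaComp E s ≃g GammaComp E t) (ψ : GammaComp E t ≃g GammaComp E s)
    (f g : V → V)
    (hgf : ∀ v, g (f v) = v)
    (himgf : ∀ a : Comp E s, (φ a).1.1 = f '' a.1.1)
    (himgg : ∀ b : Comp E t, (ψ b).1.1 = g '' b.1.1) :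
    ∀ e ∈ E, ∃ e' ∈ E, (e' : Set V) = f '' (e : Set V) := by
  classical
  have hup : ∀ (A : Set V), Indep E A → (s ∆ A).Finite → Indep E (f '' A) := by
    intro A h1 h2
    have := (φ (vmk A h1 h2)).1.2
    rwa [himgf (vmk A h1 h2)] at this
  have hsfin : (t ∆ (f '' s)).Finite := by
    have h0 : (s ∆ s).Finite := by rw [symmDiff_self]; simp
    have hthis : (t ∆ (φ (vmk s hs h0)).1.1).Finite := vfin (φ (vmk s hs h0))
    rwa [himgf (vmk s hs h0)] at hthis
  have hinjf : Function.Injective f := fun a b hab => by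
    have := congrArg g hab; rwa [hgf, hgf] at this
  have tfin : ∀ (A : Set V), (s ∆ A).Finite → (t ∆ (f '' A)).Finite := by
    intro A h2
    have h3 : (f '' s) ∆ (f '' A) = f '' (s ∆ A) := (Set.image_symmDiff hinjf s A).symm
    refine sd_fin_trans (A := f '' s) (by rw [symmDiff_comm]; exact hsfin) ?_
    rw [h3]; exact h2.image f
  have hgff : ∀ (A : Set V), g '' (f '' A) = A := by
    intro A
    rw [← Set.image_comp]
    have hcmp : g ∘ f = id := funext hgf
    rw [hcmp, Set.image_id]
  have hdown : ∀ (A : Set V), (s ∆ A).Finite → ¬ Indep E A → ¬ Indep E (f '' A) := by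
    intro A h2 hA hcon
    have hthis := (ψ (vmk (f '' A) hcon (tfin A h2))).1.2
    rw [himgg (vmk (f '' A) hcon (tfin A h2))] at hthis
    have h5 : Indep E (g '' (f '' A)) := hthis
    rw [hgff] at h5
    exact hA h5
  intro e he
  have hcard := hsimp.1 e he
  obtain ⟨u, hu⟩ : e.Nonempty := Finset.card_pos.1 (by omega)
  set N : Set V := ⋃ p ∈ (e : Set V), {z | Nbr E p z} with hNdef
  have hNfin : N.Finite := e.finite_toSet.biUnion (fun p _ => nbr_finite hlf p)
  set N' : Set V := {z | Nbr E (f u) z} with hN'def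
  have hN'fin : N'.Finite := nbr_finite hlf (f u)
  set a1 : Set V := (s \ N) \ (g '' N') with ha1def
  have hind : ∀ u' ∈ e, Indep E (a1 ∪ ((e : Set V) \ {u'})) := by
    intro u' hu' e'' he'' hsub
    by_cases hint : ∃ z, z ∈ (e'' : Set V) ∩ ((e : Set V) \ {u'})
    · obtain ⟨z0, hz0'', hz0e, _⟩ := hint
      have hsubE : (e'' : Set V) ⊆ (e : Set V) \ {u'} := by
        intro z hz
        rcases hsub hz with ⟨⟨_, hzN⟩, _⟩ | hz2
        · exact absurd (Set.mem_biUnion hz0e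
            (⟨e'', he'', Finset.mem_coe.1 hz0'', Finset.mem_coe.1 hz⟩ : Nbr E z0 z)) hzN
        · exact hz2
      have hss : e'' ⊆ e := fun z hz => (hsubE hz).1
      have he''e : e'' = e := hsimp.2 e'' he'' e he hss
      exact (hsubE (by rw [he''e]; exact Finset.mem_coe.2 hu')).2 rfl
    · push_neg at hint
      refine hs e'' he'' (fun z hz => ?_)
      rcases hsub hz with ⟨⟨hz1, _⟩, _⟩ | hz2
      · exact hz1
      · exact absurd (Set.mem_inter hz hz2) (hint z)
  have hfinF : ∀ (F : Set V), F ⊆ (e : Set V) → (s ∆ (a1 ∪ F)).Finite := by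
    intro F hF
    refine ((hNfin.union (hN'fin.image g)).union e.finite_toSet).subset ?_
    intro z hz
    rcases sd_mem.1 hz with ⟨h1, h2⟩ | ⟨h1, h2⟩
    · by_cases hzN : z ∈ N
      · exact Or.inl (Or.inl hzN)
      · by_cases hzg : z ∈ g '' N'
        · exact Or.inl (Or.inr hzg)
        · exact absurd (Or.inl ⟨⟨h1, hzN⟩, hzg⟩) h2
    · rcases h1 with hz1 | hz1
      · exact absurd hz1.1.1 h2
      · exact Or.inr (hF hz1)
  have hdep1 : ¬ Indep E (a1 ∪ (e : Set V)) := by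
    rw [not_indep_iff]
    exact ⟨e, he, fun z hz => Or.inr hz⟩
  have hdep2 : ¬ Indep E (f '' (a1 ∪ (e : Set V))) :=
    hdown _ (hfinF _ subset_rfl) hdep1
  rw [not_indep_iff] at hdep2
  obtain ⟨eh, heh, hehsub⟩ := hdep2
  rw [Set.image_union] at hehsub
  have step1 : ∀ u' ∈ e, f u' ∈ (eh : Set V) := by
    intro u' hu'
    by_contra hnot
    have hsub2 : (eh : Set V) ⊆ f '' (a1 ∪ ((e : Set V) \ {u'})) := by
      intro z hz
      have hz2 := hehsub hz
      have hzne : z ≠ f u' := fun h => hnot (h ▸ hz)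
      rw [Set.image_union]
      rcases hz2 with h | h
      · exact Or.inl h
      · obtain ⟨m, hm, rfl⟩ := h
        refine Or.inr ⟨m, ⟨hm, ?_⟩, rfl⟩
        intro hmeq
        exact hzne (by rw [Set.mem_singleton_iff.1 hmeq])
    have hindep := hup _ (hind u' hu') (hfinF _ Set.diff_subset)
    exact hindep eh heh hsub2
  have step2 : (eh : Set V) ⊆ f '' (e : Set V) := by
    intro z hz
    rcases hehsub hz with h | h
    · obtain ⟨m, hm, rfl⟩ := h
      exfalso
      have hzN' : f m ∈ N' :=
        ⟨eh, heh, Finset.mem_coe.1 (step1 u hu), Finset.mem_coe.1 hz⟩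
      exact hm.2 ⟨f m, hzN', hgf m⟩
    · exact h
  have step3 : f '' (e : Set V) ⊆ (eh : Set V) := by
    rintro z ⟨u', hu', rfl⟩
    exact step1 u' (Finset.mem_coe.1 hu')
  exact ⟨eh, heh, Set.Subset.antisymm step2 step3⟩


theorem stmt11 (E : Set (Finset V)) (hsimp : SimpleHG E) (hlf : LocFin E)
    (hni : ∀ v : V, ∃ e ∈ E, v ∈ e)
    (hasym : ∀ f : V → V, IsIsoHG E E f → ∀ v, f v = v)
    (s t : Set V) (hs : Indep E s) (ht : Indep E t)
    (h : Nonempty (GammaComp E s ≃g GammaComp E t)) :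
    (s ∆ t).Finite := by
  classical
  obtain ⟨φ⟩ := h
  obtain ⟨f, hP1, hP2⟩ := master hsimp hlf hni hs ht φ
  obtain ⟨g, hQ1, hQ2⟩ := master hsimp hlf hni ht hs φ.symm
  have hedge : ∀ (v : V), (Xv E s hs hlf v).1.1 ∆ (Yv E s hsimp hs hlf v).1.1 = {v} :=
    fun v => xset_sd_yset
  have hedge' : ∀ (w : V), (Xv E t ht hlf w).1.1 ∆ (Yv E t hsimp ht hlf w).1.1 = {w} :=
    fun w => xset_sd_yset
  have hgf : ∀ v, g (f v) = v := by
    intro v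
    have h1 := hP1 _ _ v (hedge v)
    have h2 := hQ1 (φ (Xv E s hs hlf v)) (φ (Yv E s hsimp hs hlf v)) (f v) h1
    rw [φ.symm_apply_apply, φ.symm_apply_apply, hedge v] at h2
    exact (sd_singleton_eq h2).symm
  have hfg : ∀ w, f (g w) = w := by
    intro w
    have h1 := hQ1 _ _ w (hedge' w)
    have h2 := hP1 (φ.symm (Xv E t ht hlf w)) (φ.symm (Yv E t hsimp ht hlf w)) (g w) h1
    rw [φ.apply_symm_apply, φ.apply_symm_apply, hedge' w] at h2
    exact (sd_singleton_eq h2).symm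
  have hmem : ∀ (a : Comp E s) (v : V), v ∈ a.1.1 ↔ f v ∈ (φ a).1.1 := by
    intro a v
    constructor
    · exact hP2 a v
    · intro hv
      have := hQ2 (φ a) (f v) hv
      rw [φ.symm_apply_apply, hgf] at this
      exact this
  have himgf : ∀ a : Comp E s, (φ a).1.1 = f '' a.1.1 := by
    intro a
    ext z
    constructor
    · intro hz
      refine ⟨g z, ?_, hfg z⟩
      rw [hmem a (g z), hfg z]
      exact hz
    · rintro ⟨m, hm, rfl⟩
      exact hP2 a m hm
  have himgg : ∀ b : Comp E t, (φ.symm b).1.1 = g '' b.1.1 := by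
    intro b
    ext z
    constructor
    · intro hz
      refine ⟨f z, ?_, hgf z⟩
      have := hP2 (φ.symm b) z hz
      rwa [φ.apply_symm_apply] at this
    · rintro ⟨m, hm, rfl⟩
      exact hQ2 b m hm
  have himgf' : ∀ a : Comp E s, (φ.symm.symm a).1.1 = f '' a.1.1 := by
    intro a
    exact himgf a
  have hEf := etrans hsimp hlf hs ht φ φ.symm f g hgf himgf himgg
  have hEg := etrans hsimp hlf ht hs φ.symm φ.symm.symm g f hfg himgg himgf'
  have hbij : Function.Bijective f :=
    ⟨fun a b hab => by have := congrArg g hab; rwa [hgf, hgf] at this,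
     fun z => ⟨g z, hfg z⟩⟩
  have hiso : IsIsoHG E E f := by
    refine ⟨hbij, fun e => ⟨fun he => hEf e he, ?_⟩⟩
    rintro ⟨e', he', heq⟩
    obtain ⟨e'', he'', heq2⟩ := hEg e' he'
    have hcoe : (e'' : Set V) = (e : Set V) := by
      rw [heq2, heq, ← Set.image_comp]
      have hcmp : g ∘ f = id := funext hgf
      rw [hcmp, Set.image_id]
    rwa [← Finset.coe_inj.1 hcoe]
  have hid : f = id := funext (hasym f hiso)
  have hsv : (s ∆ s).Finite := by rw [symmDiff_self]; simp
  have hfin : (t ∆ (φ (vmk s hs hsv)).1.1).Finite := vfin (φ (vmk s hs hsv))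
  rw [himgf (vmk s hs hsv)] at hfin
  rw [hid, Set.image_id] at hfin
  rw [symmDiff_comm]
  exact hfin
end

section
/- Let P be the one-way infinite path graph on vertex set ℕ (edges {n, n+1}), viewed as a hypergraph. Then every connected component of Γ_P (the infinite Fibonacci cube Γ_∞) is asymmetric, and no two distinct connected components of Γ_P are isomorphic. -/
open scoped symmDiff

variable {V : Type*}

def PathE : Set (Finset ℕ) := {e | ∃ n : ℕ, e = {n, n + 1}}

namespace S12

/-- concrete independence for the path -/
def ind (s : Set ℕ) : Prop := ∀ n, n ∈ s → n + 1 ∉ s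

lemma indep_iff (s : Set ℕ) : Indep PathE s ↔ ind s := by
  constructor
  · intro h n hn hn1
    exact h {n, n+1} ⟨n, rfl⟩ (by
      intro x hx
      simp only [Finset.coe_insert, Finset.coe_singleton, Set.mem_insert_iff,
        Set.mem_singleton_iff] at hx
      rcases hx with rfl | rfl <;> assumption)
  · rintro h e ⟨n, rfl⟩ hsub
    exact h n (hsub (by simp)) (hsub (by simp))

lemma ind_mono {s t : Set ℕ} (h : ind s) (hsub : t ⊆ s) : ind t :=
  fun n hn hn1 => h n (hsub hn) (hsub hn1)

/-- v together with its path-neighbors avoids s -/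
def avoid (v : ℕ) (s : Set ℕ) : Prop := ∀ m ∈ s, m + 1 ≠ v ∧ v + 1 ≠ m ∧ m ≠ v

lemma avoid_mono {v : ℕ} {s t : Set ℕ} (h : avoid v s) (hsub : t ⊆ s) : avoid v t :=
  fun m hm => h m (hsub hm)

lemma not_mem_of_avoid {v : ℕ} {s : Set ℕ} (h : avoid v s) : v ∉ s :=
  fun hv => (h v hv).2.2 rfl

lemma ind_insert {v : ℕ} {s : Set ℕ} (h : ind s) (hav : avoid v s) : ind (insert v s) := by
  intro n hn hn1
  rcases hn with rfl | hn
  · rcases hn1 with h1 | hn1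
    · omega
    · exact (hav _ hn1).2.1 rfl
  · rcases hn1 with h1 | hn1
    · exact (hav _ hn).1 h1
    · exact h n hn hn1

lemma avoid_of_ind_insert {v : ℕ} {s : Set ℕ} (hvs : v ∉ s) (h : ind (insert v s)) :
    avoid v s := by
  intro m hm
  refine ⟨fun h1 => ?_, fun h1 => ?_, fun h1 => hvs (h1 ▸ hm)⟩
  · exact h m (Set.mem_insert_iff.2 (Or.inr hm)) (by rw [h1]; exact Set.mem_insert _ _)
  · exact h v (Set.mem_insert _ _) (by rw [← h1] at hm; exact Set.mem_insert_iff.2 (Or.inr hm))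


/-! symmDiff helpers -/

lemma sd_insert {v : ℕ} {s : Set ℕ} (hv : v ∉ s) : s ∆ (insert v s) = {v} := by
  ext n
  simp only [Set.mem_symmDiff, Set.mem_insert_iff, Set.mem_singleton_iff]
  constructor
  · rintro (⟨hn, hn2⟩ | ⟨(rfl | hn), hn2⟩) <;> tauto
  · rintro rfl; tauto

lemma sdFin {s a b : Set ℕ} (h1 : (s ∆ a).Finite) (h2 : (a ∆ b).Finite) :
    (s ∆ b).Finite := by
  refine (h1.union h2).subset ?_
  intro n hn
  simp only [Set.mem_union, Set.mem_symmDiff] at *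
  tauto

lemma dir_unique {a b : Set ℕ} {v w : ℕ} (h1 : a ∆ b = {v}) (h2 : a ∆ b = {w}) : v = w := by
  have : ({v} : Set ℕ) = {w} := h1 ▸ h2
  simpa [Set.singleton_eq_singleton_iff] using this

lemma eq_of_sd_singleton {a b : Set ℕ} {v : ℕ} (h : a ∆ b = {v}) : b = a ∆ {v} := by
  rw [← h, symmDiff_symmDiff_cancel_left]

lemma sd_pair {v w : ℕ} (h : v ≠ w) : ({v} : Set ℕ) ∆ {w} = {v, w} := by
  ext n
  simp only [Set.mem_symmDiff, Set.mem_singleton_iff, Set.mem_insert_iff]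
  constructor
  · rintro (⟨rfl, _⟩ | ⟨rfl, _⟩) <;> tauto
  · rintro (rfl | rfl)
    · exact Or.inl ⟨rfl, h⟩
    · exact Or.inr ⟨rfl, fun hh => h hh.symm⟩

lemma pair_not_singleton {v w z : ℕ} (hvw : v ≠ w) : ({v} : Set ℕ) ∆ {w} ≠ {z} := by
  rw [sd_pair hvw]
  intro h
  have hv : v ∈ ({z} : Set ℕ) := h ▸ (by simp : v ∈ ({v, w} : Set ℕ))
  have hw : w ∈ ({z} : Set ℕ) := h ▸ (by simp : w ∈ ({v, w} : Set ℕ))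
  simp only [Set.mem_singleton_iff] at hv hw
  exact hvw (hv.trans hw.symm)

lemma cancel_mid {A A' B B' D : Set ℕ} (h1 : A ∆ A' = D) (h2 : B ∆ B' = D) :
    A ∆ B = A' ∆ B' := by
  have hA : A' = A ∆ D := by rw [← h1, symmDiff_symmDiff_cancel_left]
  have hB : B' = B ∆ D := by rw [← h2, symmDiff_symmDiff_cancel_left]
  rw [hA, hB, symmDiff_symmDiff_symmDiff_comm, symmDiff_self, symmDiff_bot]

/-! packaging component vertices -/

def cv (s : Set ℕ) (u : Set ℕ) (h1 : ind u) (h2 : (s ∆ u).Finite) : ↥(Comp PathE s) :=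
  ⟨⟨u, (indep_iff u).2 h1⟩, h2⟩

@[simp] lemma cv_val (s u : Set ℕ) (h1 : ind u) (h2 : (s ∆ u).Finite) :
    (cv s u h1 h2).1.1 = u := rfl

lemma adj_iff {s : Set ℕ} (a b : ↥(Comp PathE s)) :
    (GammaComp PathE s).Adj a b ↔ ∃ v, a.1.1 ∆ b.1.1 = {v} := Iff.rfl

lemma comp_eq {s : Set ℕ} {a b : ↥(Comp PathE s)} (h : a.1.1 = b.1.1) : a = b :=
  Subtype.ext (Subtype.ext h)



lemma sd_chain {P Q R X Y : Set ℕ} (h1 : P ∆ Q = X) (h2 : Q ∆ R = Y) : P ∆ R = X ∆ Y := by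
  rw [← h1, ← h2, symmDiff_assoc, symmDiff_symmDiff_cancel_left]

section Iso

variable {s t : Set ℕ} (φ : GammaComp PathE s ≃g GammaComp PathE t)

lemma img_adj {a b : ↥(Comp PathE s)} {v : ℕ} (h : a.1.1 ∆ b.1.1 = {v}) :
    ∃ x, (φ a).1.1 ∆ (φ b).1.1 = {x} :=
  (adj_iff _ _).1 (φ.map_rel_iff.2 ⟨v, h⟩)

lemma square {a b a' b' : ↥(Comp PathE s)} {v w x x' : ℕ}
    (hab : a.1.1 ∆ b.1.1 = {v}) (haa : a.1.1 ∆ a'.1.1 = {w})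
    (hbb : b.1.1 ∆ b'.1.1 = {w}) (hvw : v ≠ w)
    (hx : (φ a).1.1 ∆ (φ b).1.1 = {x}) (hx' : (φ a').1.1 ∆ (φ b').1.1 = {x'}) :
    x = x' := by
  obtain ⟨y, hy⟩ := img_adj φ haa
  obtain ⟨y', hy'⟩ := img_adj φ hbb
  -- x ≠ y
  have hba' : b.1.1 ∆ a'.1.1 = {v} ∆ {w} :=
    sd_chain (symmDiff_comm a.1.1 b.1.1 ▸ hab) haa
  have hab' : a.1.1 ∆ b'.1.1 = {v} ∆ {w} := sd_chain hab hbb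
  have hxy : x ≠ y := by
    rintro rfl
    have h1 : (φ b).1.1 ∆ (φ a').1.1 = ({x} : Set ℕ) ∆ {x} :=
      sd_chain (symmDiff_comm (φ a).1.1 (φ b).1.1 ▸ hx) hy
    rw [symmDiff_self] at h1
    have : (φ b) = (φ a') := comp_eq (symmDiff_eq_bot.1 h1)
    have hba : b = a' := φ.injective this
    rw [hba, symmDiff_self, sd_pair hvw] at hba'
    have hv : v ∈ ({v, w} : Set ℕ) := by simp
    rw [← hba'] at hv
    simpa using hv
  have hxy' : x ≠ y' := by
    rintro rfl
    have h1 : (φ a).1.1 ∆ (φ b').1.1 = ({x} : Set ℕ) ∆ {x} := sd_chain hx hy'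
    rw [symmDiff_self] at h1
    have hba : a = b' := φ.injective (comp_eq (symmDiff_eq_bot.1 h1))
    rw [hba, symmDiff_self, sd_pair hvw] at hab'
    have hv : v ∈ ({v, w} : Set ℕ) := by simp
    rw [← hab'] at hv
    simpa using hv
  -- conclude
  have h2 : (φ a').1.1 ∆ (φ b').1.1 = ({y} ∆ {x}) ∆ ({y'} : Set ℕ) :=
    sd_chain (sd_chain (symmDiff_comm (φ a).1.1 (φ a').1.1 ▸ hy) hx) hy'
  rw [hx'] at h2
  have : x ∈ (({y} ∆ {x}) ∆ ({y'} : Set ℕ)) := by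
    simp [Set.mem_symmDiff, hxy, hxy']
  rw [← h2] at this
  simpa using this

end Iso


lemma sd_remove {w : ℕ} {u : Set ℕ} (hw : w ∈ u) : u ∆ (u \ {w}) = {w} := by
  ext n
  simp only [Set.mem_symmDiff, Set.mem_diff, Set.mem_singleton_iff]
  constructor
  · rintro (⟨hn, hn2⟩ | ⟨⟨hn, hn2⟩, hn3⟩) <;> tauto
  · rintro rfl; tauto

lemma sd_remove_fin {w : ℕ} {u : Set ℕ} : (u ∆ (u \ {w})).Finite := by
  refine (Set.finite_singleton w).subset ?_
  intro n hn
  simp only [Set.mem_symmDiff, Set.mem_diff, Set.mem_singleton_iff] at *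
  tauto

lemma sd_insert_congr {v : ℕ} {A B : Set ℕ} (hv : v ∉ A) (hv' : v ∉ B) :
    (insert v A) ∆ (insert v B) = A ∆ B := by
  ext n
  simp only [Set.mem_symmDiff, Set.mem_insert_iff]
  constructor
  · rintro (⟨rfl | hn, hn2⟩ | ⟨rfl | hn, hn2⟩) <;> tauto
  · rintro (⟨hn, hn2⟩ | ⟨hn, hn2⟩)
    · exact Or.inl ⟨Or.inr hn, fun h => h.elim (fun h => hv (h ▸ hn)) hn2⟩
    · exact Or.inr ⟨Or.inr hn, fun h => h.elim (fun h => hv' (h ▸ hn)) hn2⟩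

lemma sd_step_remove {w : ℕ} {u u' : Set ℕ} (hw : w ∈ u) (hw' : w ∉ u') :
    (u \ {w}) ∆ u' = (u ∆ u') \ {w} := by
  ext n
  by_cases hnw : n = w
  · subst hnw; simp [Set.mem_symmDiff, hw, hw']
  · simp only [Set.mem_symmDiff, Set.mem_diff, Set.mem_singleton_iff, hnw]
    tauto

lemma sd_step_add {w : ℕ} {u u' : Set ℕ} (hw : w ∉ u) (hw' : w ∈ u') :
    (insert w u) ∆ u' = (u ∆ u') \ {w} := by
  ext n
  by_cases hnw : n = w
  · subst hnw; simp [Set.mem_symmDiff, hw, hw']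
  · simp only [Set.mem_symmDiff, Set.mem_diff, Set.mem_singleton_iff, Set.mem_insert_iff, hnw]
    tauto

lemma fin_insert {s u : Set ℕ} (h2 : (s ∆ u).Finite) {v : ℕ} (hv : v ∉ u) :
    (s ∆ insert v u).Finite :=
  sdFin h2 (by rw [sd_insert hv]; exact Set.finite_singleton v)

lemma fin_remove {s u : Set ℕ} (h2 : (s ∆ u).Finite) {w : ℕ} :
    (s ∆ (u \ {w})).Finite :=
  sdFin h2 sd_remove_fin

section Iso2

variable {s t : Set ℕ} (φ : GammaComp PathE s ≃g GammaComp PathE t)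

lemma dir_const (n : ℕ) :
    ∀ (a b a' b' : ↥(Comp PathE s)) (v : ℕ),
      avoid v a.1.1 → avoid v a'.1.1 →
      b.1.1 = insert v a.1.1 → b'.1.1 = insert v a'.1.1 →
      (a.1.1 ∆ a'.1.1).ncard = n →
      ∀ x x', (φ a).1.1 ∆ (φ b).1.1 = {x} → (φ a').1.1 ∆ (φ b').1.1 = {x'} →
      x = x' := by
  induction n using Nat.strong_induction_on with
  | _ n IH =>
    intro a b a' b' v hav hav' hb hb' hcard x x' hx hx'
    set u := a.1.1 with hu
    set u' := a'.1.1 with hu'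
    have h1 : ind u := (indep_iff u).1 a.1.2
    have h1' : ind u' := (indep_iff u').1 a'.1.2
    have h2 : (s ∆ u).Finite := a.2
    have h2' : (s ∆ u').Finite := a'.2
    have hfin : (u ∆ u').Finite := sdFin (symmDiff_comm s u ▸ h2) h2'
    by_cases hEq : u = u'
    · have haa' : a = a' := comp_eq hEq
      have hbb' : b = b' := comp_eq (by rw [hb, hb', hEq])
      rw [haa', hbb'] at hx
      exact dir_unique hx hx'
    · -- pick a step element
      by_cases hne : (u \ u').Nonempty
      · obtain ⟨w, hwU, hwU'⟩ := hne
        have hwvne : v ≠ w := fun h => (hav w hwU).2.2 h.symm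
        have hvu : v ∉ u := not_mem_of_avoid hav
        -- new pair
        set u'' := u \ {w} with hu''
        have h1'' : ind u'' := ind_mono h1 Set.diff_subset
        have hav'' : avoid v u'' := avoid_mono hav Set.diff_subset
        have hvu'' : v ∉ u'' := not_mem_of_avoid hav''
        set a'' : ↥(Comp PathE s) := cv s u'' h1'' (fin_remove h2) with ha''
        set b'' : ↥(Comp PathE s) :=
          cv s (insert v u'') (ind_insert h1'' hav'') (fin_insert (fin_remove h2) hvu'') with hb''
        obtain ⟨x'', hx''⟩ := img_adj φ (a := a'') (b := b'') (sd_insert hvu'')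
        have step1 : x = x'' := by
          refine square φ (v := v) (w := w) ?_ ?_ ?_ hwvne hx hx''
          · rw [hb]; exact sd_insert hvu
          · exact sd_remove hwU
          · show b.1.1 ∆ (insert v u'') = {w}
            rw [hb, sd_insert_congr hvu hvu'']
            exact sd_remove hwU
        have hcard'' : (u'' ∆ u').ncard < n := by
          rw [hu'', sd_step_remove hwU hwU', ← hcard]
          exact Set.ncard_diff_singleton_lt_of_mem
            (Set.mem_symmDiff.2 (Or.inl ⟨hwU, hwU'⟩)) hfin
        have step2 : x'' = x' :=
          IH _ hcard'' a'' b'' a' b' v hav'' hav' rfl hb' rfl x'' x' hx'' hx'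
        exact step1.trans step2
      · -- u ⊆ u', pick w ∈ u' \ u
        have hsub : u ⊆ u' := by
          intro m hm
          by_contra hmm
          exact hne ⟨m, hm, hmm⟩
        have hne2 : (u' \ u).Nonempty := by
          rcases Set.nonempty_iff_ne_empty.2 (fun h => hEq (symmDiff_eq_bot.1 h)) with ⟨w, hw⟩
          rcases Set.mem_symmDiff.1 hw with ⟨hw1, hw2⟩ | ⟨hw1, hw2⟩
          · exact absurd hw2 (by simpa using hsub hw1)
          · exact ⟨w, hw1, hw2⟩
        obtain ⟨w, hwU', hwU⟩ := hne2
        have hwvne : v ≠ w := fun h => (hav' w hwU').2.2 h.symm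
        have hvu : v ∉ u := not_mem_of_avoid hav
        set u'' := insert w u with hu''
        have hsub'' : u'' ⊆ u' := Set.insert_subset hwU' hsub
        have h1'' : ind u'' := ind_mono h1' hsub''
        have hav'' : avoid v u'' := avoid_mono hav' hsub''
        have hvu'' : v ∉ u'' := not_mem_of_avoid hav''
        set a'' : ↥(Comp PathE s) := cv s u'' h1'' (fin_insert h2 hwU) with ha''
        set b'' : ↥(Comp PathE s) :=
          cv s (insert v u'') (ind_insert h1'' hav'') (fin_insert (fin_insert h2 hwU) hvu'') with hb''
        obtain ⟨x'', hx''⟩ := img_adj φ (a := a'') (b := b'') (sd_insert hvu'')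
        have step1 : x = x'' := by
          refine square φ (v := v) (w := w) ?_ ?_ ?_ hwvne hx hx''
          · rw [hb]; exact sd_insert hvu
          · exact sd_insert hwU
          · show b.1.1 ∆ (insert v u'') = {w}
            rw [hb, sd_insert_congr hvu hvu'']
            exact sd_insert hwU
        have hcard'' : (u'' ∆ u').ncard < n := by
          rw [hu'', sd_step_add hwU hwU', ← hcard]
          exact Set.ncard_diff_singleton_lt_of_mem
            (Set.mem_symmDiff.2 (Or.inr ⟨hwU', hwU⟩)) hfin
        have step2 : x'' = x' :=
          IH _ hcard'' a'' b'' a' b' v hav'' hav' rfl hb' rfl x'' x' hx'' hx'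
        exact step1.trans step2

end Iso2


lemma sd_singleton_eq_insert {v : ℕ} {a : Set ℕ} (hv : v ∉ a) : a ∆ {v} = insert v a := by
  ext n
  by_cases hnv : n = v
  · subst hnv; simp [Set.mem_symmDiff, hv]
  · simp only [Set.mem_symmDiff, Set.mem_singleton_iff, Set.mem_insert_iff, hnv]
    tauto

def base (s : Set ℕ) (v : ℕ) : Set ℕ := {n ∈ s | n + 1 ≠ v ∧ v + 1 ≠ n ∧ n ≠ v}

lemma base_subset (s : Set ℕ) (v : ℕ) : base s v ⊆ s := fun _ h => h.1

lemma base_avoid (s : Set ℕ) (v : ℕ) : avoid v (base s v) := fun _ h => h.2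

lemma base_ind {s : Set ℕ} (hs : ind s) (v : ℕ) : ind (base s v) :=
  ind_mono hs (base_subset s v)

lemma base_fin (s : Set ℕ) (v : ℕ) : (s ∆ base s v).Finite := by
  refine (((Set.finite_singleton v).insert (v + 1)).insert (v - 1)).subset ?_
  intro n hn
  rcases Set.mem_symmDiff.1 hn with ⟨hn1, hn2⟩ | ⟨hn1, hn2⟩
  · simp only [base, Set.mem_setOf_eq, not_and, not_not] at hn2
    simp only [Set.mem_insert_iff, Set.mem_singleton_iff]
    by_contra hc
    push_neg at hc
    obtain ⟨c1, c2, c3⟩ := hc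
    have := hn2 hn1
    omega
  · exact absurd (base_subset s v hn1) hn2

section Iso3

variable {s t : Set ℕ} (φ : GammaComp PathE s ≃g GammaComp PathE t)
  (hs : ind s) (ht : ind t)

def bcv (hs : ind s) (v : ℕ) : ↥(Comp PathE s) :=
  cv s (base s v) (base_ind hs v) (base_fin s v)

def bcv' (hs : ind s) (v : ℕ) : ↥(Comp PathE s) :=
  cv s (insert v (base s v)) (ind_insert (base_ind hs v) (base_avoid s v))
    (fin_insert (base_fin s v) (not_mem_of_avoid (base_avoid s v)))

lemma bcv_dir (v : ℕ) : (bcv hs v).1.1 ∆ (bcv' hs v).1.1 = {v} :=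
  sd_insert (not_mem_of_avoid (base_avoid s v))

noncomputable def dmap (v : ℕ) : ℕ :=
  Classical.choose (img_adj φ (bcv_dir hs v))

lemma dmap_spec (v : ℕ) :
    (φ (bcv hs v)).1.1 ∆ (φ (bcv' hs v)).1.1 = {dmap φ hs v} :=
  Classical.choose_spec (img_adj φ (bcv_dir hs v))

lemma dir_img_aux {a b : ↥(Comp PathE s)} {v x : ℕ}
    (hva : v ∉ a.1.1) (hab : a.1.1 ∆ b.1.1 = {v})
    (hx : (φ a).1.1 ∆ (φ b).1.1 = {x}) : x = dmap φ hs v := by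
  have hbval : b.1.1 = insert v a.1.1 := by
    rw [eq_of_sd_singleton hab, sd_singleton_eq_insert hva]
  have hindb : ind (insert v a.1.1) := hbval ▸ (indep_iff _).1 b.1.2
  have hav : avoid v a.1.1 := avoid_of_ind_insert hva hindb
  exact dir_const φ _ a b (bcv hs v) (bcv' hs v) v hav (base_avoid s v)
    hbval rfl rfl x _ hx (dmap_spec φ hs v)

lemma dir_img {a b : ↥(Comp PathE s)} {v x : ℕ}
    (hab : a.1.1 ∆ b.1.1 = {v})
    (hx : (φ a).1.1 ∆ (φ b).1.1 = {x}) : x = dmap φ hs v := by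
  by_cases hva : v ∈ a.1.1
  · -- swap the roles of a and b
    have hba : b.1.1 ∆ a.1.1 = {v} := by rwa [symmDiff_comm]
    have hvb : v ∉ b.1.1 := by
      intro hvb
      have : v ∉ a.1.1 ∆ b.1.1 := fun h => by
        rcases Set.mem_symmDiff.1 h with ⟨_, h2⟩ | ⟨_, h2⟩ <;> tauto
      rw [hab] at this
      exact this rfl
    exact dir_img_aux φ hs hvb hba (by rwa [symmDiff_comm])
  · exact dir_img_aux φ hs hva hab hx

lemma dmap_left_inv (v : ℕ) : dmap φ.symm ht (dmap φ hs v) = v := by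
  have h := dir_img φ.symm ht (a := φ (bcv hs v)) (b := φ (bcv' hs v))
    (dmap_spec φ hs v)
    (x := v) (by rw [φ.symm_apply_apply, φ.symm_apply_apply]; exact bcv_dir hs v)
  exact h.symm

end Iso3


lemma mem_flip {n p : ℕ} {T : Set ℕ} :
    n ∈ T ∆ ({p} : Set ℕ) ↔ (n ∈ T ∧ n ≠ p) ∨ (n = p ∧ n ∉ T) := by
  simp [Set.mem_symmDiff]

lemma sd_insert_self {v : ℕ} {u : Set ℕ} (hv : v ∉ u) : (insert v u) ∆ {v} = u := by
  rw [eq_of_sd_singleton (sd_insert hv), symmDiff_symmDiff_cancel_right]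

lemma ind_of_two_flips {T : Set ℕ} {p q : ℕ} (hT : ind T) (hp : ind (T ∆ {p}))
    (hq : ind (T ∆ {q})) (hpq : p ≠ q) (h1 : p + 1 ≠ q) (h2 : q + 1 ≠ p) :
    ind (T ∆ {p} ∆ {q}) := by
  have key : ∀ n, n ∈ T ∆ {p} ∆ {q} ↔
      (n ∈ T ∧ n ≠ p ∧ n ≠ q) ∨ (n = p ∧ n ∉ T) ∨ (n = q ∧ n ∉ T) := by
    intro n
    rw [mem_flip, mem_flip]
    constructor
    · rintro (⟨(⟨h3, h4⟩ | ⟨rfl, h4⟩), h5⟩ | ⟨rfl, h5⟩) <;> tauto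
    · rintro (⟨h3, h4, h5⟩ | ⟨rfl, h3⟩ | ⟨rfl, h3⟩)
      · exact Or.inl ⟨Or.inl ⟨h3, h4⟩, h5⟩
      · exact Or.inl ⟨Or.inr ⟨rfl, h3⟩, hpq⟩
      · refine Or.inr ⟨rfl, fun hc => ?_⟩
        rcases hc with ⟨h4, _⟩ | ⟨h4, _⟩ <;> tauto
  intro n hn hn1
  rw [key] at hn hn1
  rcases hn with ⟨h3, h4, h5⟩ | ⟨rfl, h3⟩ | ⟨rfl, h3⟩ <;>
    rcases hn1 with ⟨g3, g4, g5⟩ | ⟨g3, g4⟩ | ⟨g3, g4⟩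
  · exact hT n h3 g3
  · exact hp n (mem_flip.2 (Or.inl ⟨h3, h4⟩)) (mem_flip.2 (Or.inr ⟨g3, g4⟩))
  · exact hq n (mem_flip.2 (Or.inl ⟨h3, h5⟩)) (mem_flip.2 (Or.inr ⟨g3, g4⟩))
  · exact hp n (mem_flip.2 (Or.inr ⟨rfl, h3⟩)) (mem_flip.2 (Or.inl ⟨g3, fun hc => g4 (by omega)⟩))
  · omega
  · omega
  · exact hq n (mem_flip.2 (Or.inr ⟨rfl, h3⟩)) (mem_flip.2 (Or.inl ⟨g3, fun hc => g4 (by omega)⟩))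
  · exact h2 (by omega)
  · omega

lemma fin_inter {s a b : Set ℕ} (ha : a ⊆ s) (hfa : (s ∆ a).Finite)
    (hfb : (s ∆ b).Finite) : (s ∆ (a ∩ b)).Finite := by
  refine (hfa.union hfb).subset ?_
  intro n hn
  simp only [Set.mem_symmDiff, Set.mem_inter_iff, Set.mem_union] at *
  tauto

section Iso4

variable {s t : Set ℕ} (φ : GammaComp PathE s ≃g GammaComp PathE t)
  (hs : ind s) (ht : ind t)

lemma dmap_adj (v : ℕ) :
    dmap φ hs (v + 1) = dmap φ hs v + 1 ∨ dmap φ hs v = dmap φ hs (v + 1) + 1 := by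
  classical
  set u0 : Set ℕ := base s v ∩ base s (v + 1) with hu0
  have hsub : u0 ⊆ s := (Set.inter_subset_left).trans (base_subset s v)
  have hind0 : ind u0 := ind_mono hs hsub
  have hav1 : avoid v u0 := avoid_mono (base_avoid s v) Set.inter_subset_left
  have hav2 : avoid (v + 1) u0 := avoid_mono (base_avoid s (v + 1)) Set.inter_subset_right
  have hfin0 : (s ∆ u0).Finite := fin_inter (base_subset s v) (base_fin s v) (base_fin s (v + 1))
  have hv0 : v ∉ u0 := not_mem_of_avoid hav1
  have hv10 : v + 1 ∉ u0 := not_mem_of_avoid hav2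
  set c : ↥(Comp PathE s) := cv s u0 hind0 hfin0 with hc
  set a : ↥(Comp PathE s) :=
    cv s (insert v u0) (ind_insert hind0 hav1) (fin_insert hfin0 hv0) with ha
  set b : ↥(Comp PathE s) :=
    cv s (insert (v + 1) u0) (ind_insert hind0 hav2) (fin_insert hfin0 hv10) with hbdef
  have hca : c.1.1 ∆ a.1.1 = {v} := sd_insert hv0
  have hcb : c.1.1 ∆ b.1.1 = {v + 1} := sd_insert hv10
  obtain ⟨x, hx⟩ := img_adj φ hca
  obtain ⟨y, hy⟩ := img_adj φ hcb
  have hxv : x = dmap φ hs v := dir_img φ hs hca hx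
  have hyv : y = dmap φ hs (v + 1) := dir_img φ hs hcb hy
  subst hxv; subst hyv
  set p := dmap φ hs v
  set q := dmap φ hs (v + 1)
  have hpq : p ≠ q := by
    rintro h
    rw [h] at hx
    have : φ a = φ b := comp_eq (by
      have e1 := eq_of_sd_singleton hx
      have e2 := eq_of_sd_singleton hy
      rw [e1, e2])
    have hab : a = b := φ.injective this
    have : v ∈ (insert (v + 1) u0 : Set ℕ) := by
      have : v ∈ a.1.1 := Set.mem_insert _ _
      rwa [hab] at this
    rcases this with h' | h'
    · omega
    · exact hv0 h'
  by_contra hadj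
  push_neg at hadj
  obtain ⟨hq1, hq2⟩ := hadj
  set T := (φ c).1.1 with hT
  have hTa : (φ a).1.1 = T ∆ {p} := eq_of_sd_singleton hx
  have hTb : (φ b).1.1 = T ∆ {q} := eq_of_sd_singleton hy
  have hindT : ind T := (indep_iff _).1 (φ c).1.2
  have hindTp : ind (T ∆ {p}) := hTa ▸ (indep_iff _).1 (φ a).1.2
  have hindTq : ind (T ∆ {q}) := hTb ▸ (indep_iff _).1 (φ b).1.2
  have hindc' : ind (T ∆ {p} ∆ {q}) :=
    ind_of_two_flips hindT hindTp hindTq hpq (fun h => hq1 h.symm) (fun h => hq2 h.symm)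
  have hfinc' : (t ∆ (T ∆ {p} ∆ {q})).Finite := by
    refine sdFin (φ c).2 ?_
    rw [symmDiff_assoc, symmDiff_symmDiff_cancel_left]
    exact Set.Finite.subset ((Set.finite_singleton p).union (Set.finite_singleton q))
      symmDiff_le_sup
  set cz : ↥(Comp PathE t) := cv t (T ∆ {p} ∆ {q}) hindc' hfinc' with hcz
  have hcza : cz.1.1 ∆ (φ a).1.1 = {q} := by
    rw [hTa]
    show T ∆ {p} ∆ {q} ∆ (T ∆ {p}) = {q}
    rw [symmDiff_comm, symmDiff_symmDiff_cancel_left]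
  have hczb : cz.1.1 ∆ (φ b).1.1 = {p} := by
    rw [hTb]
    show T ∆ {p} ∆ {q} ∆ (T ∆ {q}) = {p}
    rw [symmDiff_right_comm T ({p} : Set ℕ) ({q} : Set ℕ),
      symmDiff_comm (T ∆ {q} ∆ {p}) (T ∆ {q}), symmDiff_symmDiff_cancel_left]
  obtain ⟨x1, hx1⟩ := img_adj φ.symm hcza
  rw [φ.symm_apply_apply] at hx1
  set e := φ.symm cz with he
  -- a ∆ b
  have habd : a.1.1 ∆ b.1.1 = {v} ∆ ({v + 1} : Set ℕ) :=
    sd_chain (symmDiff_comm c.1.1 a.1.1 ▸ hca) hcb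
  obtain ⟨x2, hx2⟩ := img_adj φ.symm hczb
  rw [φ.symm_apply_apply] at hx2
  have hx1x2 : ({x1} : Set ℕ) ∆ {x2} = {v} ∆ {v + 1} := by
    rw [← habd]
    exact (sd_chain (symmDiff_comm e.1.1 a.1.1 ▸ hx1) hx2).symm
  have hx1ne : x1 ≠ x2 := by
    rintro rfl
    rw [symmDiff_self, sd_pair (by omega : v ≠ v + 1)] at hx1x2
    have : v ∈ ({v, v + 1} : Set ℕ) := by simp
    rw [← hx1x2] at this
    simpa using this
  have hx1mem : x1 = v ∨ x1 = v + 1 := by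
    have : x1 ∈ ({v} : Set ℕ) ∆ {v + 1} := by
      rw [← hx1x2, sd_pair hx1ne]; simp
    rw [sd_pair (by omega : v ≠ v + 1)] at this
    simpa using this
  rcases hx1mem with rfl | rfl
  · -- e = c, so cz = φ c, contradiction with p ∈ {p} ∆ {q}
    have hE : e.1.1 = u0 := by
      have h' := eq_of_sd_singleton (symmDiff_comm e.1.1 a.1.1 ▸ hx1)
      rw [h']
      show (insert x1 u0) ∆ {x1} = u0
      exact sd_insert_self hv0
    have hec : e = c := comp_eq hE
    have hczc : cz = φ c := by rw [← φ.apply_symm_apply cz, ← he, hec]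
    have hval : T ∆ {p} ∆ {q} = T := congrArg (fun z => z.1.1) hczc
    have hval' : T ∆ ({p} ∆ {q}) = T := by rw [← symmDiff_assoc]; exact hval
    have hb : ({p} : Set ℕ) ∆ {q} = ⊥ := by
      have h2 := congrArg (fun z => T ∆ z) hval'
      rw [symmDiff_symmDiff_cancel_left, symmDiff_self] at h2
      exact h2
    exact hpq (Set.singleton_eq_singleton_iff.1 (symmDiff_eq_bot.1 hb))
  · -- e contains v and v+1, contradicting independence
    have hE : e.1.1 = insert (v + 1) (insert v u0) := by
      have h' := eq_of_sd_singleton (symmDiff_comm e.1.1 a.1.1 ▸ hx1)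
      rw [h']
      show (insert v u0) ∆ {v + 1} = insert (v + 1) (insert v u0)
      exact sd_singleton_eq_insert (by
        rintro (h | h)
        · omega
        · exact hv10 h)
    have hinde : ind e.1.1 := (indep_iff _).1 e.1.2
    have h1 : v ∈ e.1.1 := by rw [hE]; exact Set.mem_insert_iff.2 (Or.inr (Set.mem_insert _ _))
    have h2 : v + 1 ∈ e.1.1 := by rw [hE]; exact Set.mem_insert _ _
    exact hinde v h1 h2

end Iso4


lemma ray_rigid (f g : ℕ → ℕ)
    (hgf : ∀ v, g (f v) = v) (hfg : ∀ w, f (g w) = w)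
    (hf : ∀ v, f (v + 1) = f v + 1 ∨ f v = f (v + 1) + 1)
    (hg : ∀ v, g (v + 1) = g v + 1 ∨ g v = g (v + 1) + 1) :
    ∀ n, f n = n := by
  have hfinj : Function.Injective f := Function.LeftInverse.injective hgf
  have f0 : f 0 = 0 := by
    by_contra h0
    obtain ⟨m, hm⟩ : ∃ m, f 0 = m + 1 := ⟨f 0 - 1, by omega⟩
    have hgm1 : g (m + 1) = 0 := by rw [← hm, hgf]
    have h1 : g m = 1 := by
      rcases hg m with h | h
      · omega
      · omega
    have h2 : g (m + 2) = 1 := by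
      have h := hg (m + 1)
      rw [show m + 1 + 1 = m + 2 from rfl] at h
      rcases h with h | h <;> omega
    have := congrArg f (h1.trans h2.symm)
    rw [hfg, hfg] at this
    omega
  intro n
  induction n using Nat.strong_induction_on with
  | _ n IH =>
    match n with
    | 0 => exact f0
    | 1 =>
      rcases hf 0 with h | h
      · rw [h, f0]
      · rw [f0] at h; omega
    | (k + 2) =>
      have hk1 : f (k + 1) = k + 1 := IH (k + 1) (by omega)
      have hk : f k = k := IH k (by omega)
      have hh := hf (k + 1)
      rw [show k + 1 + 1 = k + 2 from rfl] at hh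
      rcases hh with h | h
      · rw [h, hk1]
      · rw [hk1] at h
        have : f (k + 2) = k := by omega
        have := hfinj (this.trans hk.symm)
        omega

section Iso5

variable {s t : Set ℕ} (φ : GammaComp PathE s ≃g GammaComp PathE t)

lemma dmap_id (hs : ind s) (ht : ind t) (v : ℕ) : dmap φ hs v = v := by
  have hfg : ∀ w, dmap φ hs (dmap φ.symm ht w) = w := by
    intro w
    have := dmap_left_inv φ.symm ht hs w
    exact this
  exact ray_rigid (dmap φ hs) (dmap φ.symm ht) (dmap_left_inv φ hs ht) hfg
    (dmap_adj φ hs) (dmap_adj φ.symm ht) v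

lemma dir_preserved (hs : ind s) (ht : ind t) {a b : ↥(Comp PathE s)} {v : ℕ}
    (hab : a.1.1 ∆ b.1.1 = {v}) : (φ a).1.1 ∆ (φ b).1.1 = {v} := by
  obtain ⟨x, hx⟩ := img_adj φ hab
  have := dir_img φ hs hab hx
  rw [dmap_id φ hs ht] at this
  rwa [this] at hx

lemma offset_const (hs : ind s) (ht : ind t) (n : ℕ) :
    ∀ a a' : ↥(Comp PathE s), (a.1.1 ∆ a'.1.1).ncard = n →
      a.1.1 ∆ (φ a).1.1 = a'.1.1 ∆ (φ a').1.1 := by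
  induction n using Nat.strong_induction_on with
  | _ n IH =>
    intro a a' hcard
    set u := a.1.1 with hu
    set u' := a'.1.1 with hu'
    have h1 : ind u := (indep_iff u).1 a.1.2
    have h1' : ind u' := (indep_iff u').1 a'.1.2
    have h2 : (s ∆ u).Finite := a.2
    have h2' : (s ∆ u').Finite := a'.2
    have hfin : (u ∆ u').Finite := sdFin (symmDiff_comm s u ▸ h2) h2'
    by_cases hEq : u = u'
    · rw [comp_eq (b := a') hEq, hEq]
    · by_cases hne : (u \ u').Nonempty
      · obtain ⟨w, hwU, hwU'⟩ := hne
        set u'' := u \ {w} with hu''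
        set a'' : ↥(Comp PathE s) :=
          cv s u'' (ind_mono h1 Set.diff_subset) (fin_remove h2) with ha''
        have hdir : a.1.1 ∆ a''.1.1 = {w} := sd_remove hwU
        have himg : (φ a).1.1 ∆ (φ a'').1.1 = {w} := dir_preserved φ hs ht hdir
        have step : a.1.1 ∆ (φ a).1.1 = a''.1.1 ∆ (φ a'').1.1 := cancel_mid hdir himg
        rw [step]
        refine IH _ ?_ a'' a' rfl
        rw [← hcard]
        show ((u \ {w}) ∆ u').ncard < (u ∆ u').ncard
        rw [sd_step_remove hwU hwU']
        exact Set.ncard_diff_singleton_lt_of_mem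
          (Set.mem_symmDiff.2 (Or.inl ⟨hwU, hwU'⟩)) hfin
      · have hsub : u ⊆ u' := fun m hm => by
          by_contra hmm
          exact hne ⟨m, hm, hmm⟩
        have hne2 : (u' \ u).Nonempty := by
          rcases Set.nonempty_iff_ne_empty.2 (fun h => hEq (symmDiff_eq_bot.1 h)) with ⟨w, hw⟩
          rcases Set.mem_symmDiff.1 hw with ⟨hw1, hw2⟩ | ⟨hw1, hw2⟩
          · exact absurd hw2 (by simpa using hsub hw1)
          · exact ⟨w, hw1, hw2⟩
        obtain ⟨w, hwU', hwU⟩ := hne2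
        set u'' := insert w u with hu''
        set a'' : ↥(Comp PathE s) :=
          cv s u'' (ind_mono h1' (Set.insert_subset hwU' hsub)) (fin_insert h2 hwU) with ha''
        have hdir : a.1.1 ∆ a''.1.1 = {w} := sd_insert hwU
        have himg : (φ a).1.1 ∆ (φ a'').1.1 = {w} := dir_preserved φ hs ht hdir
        have step : a.1.1 ∆ (φ a).1.1 = a''.1.1 ∆ (φ a'').1.1 := cancel_mid hdir himg
        rw [step]
        refine IH _ ?_ a'' a' rfl
        rw [← hcard]
        show ((insert w u) ∆ u').ncard < (u ∆ u').ncard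
        rw [sd_step_add hwU hwU']
        exact Set.ncard_diff_singleton_lt_of_mem
          (Set.mem_symmDiff.2 (Or.inr ⟨hwU', hwU⟩)) hfin

lemma main_fixed (hs : ind s) (ht : ind t) : ∀ a : ↥(Comp PathE s), (φ a).1.1 = a.1.1 := by
  have hsfin : (s ∆ s).Finite := by rw [symmDiff_self]; exact Set.finite_empty
  set a0 : ↥(Comp PathE s) := cv s s hs hsfin with ha0
  set D := a0.1.1 ∆ (φ a0).1.1 with hD
  have hconst : ∀ a : ↥(Comp PathE s), a.1.1 ∆ (φ a).1.1 = D :=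
    fun a => offset_const φ hs ht _ a a0 rfl
  have hDempty : D = ∅ := by
    by_contra hDne
    obtain ⟨v, hv⟩ := Set.nonempty_iff_ne_empty.2 hDne
    by_cases hv1 : v + 1 ∈ D
    · -- u* = s minus v, v+1
      set u : Set ℕ := {n ∈ s | n ≠ v ∧ n ≠ v + 1} with huast
      have hindu : ind u := ind_mono hs (fun _ h => h.1)
      have hfinu : (s ∆ u).Finite := by
        refine ((Set.finite_singleton (v + 1)).insert v).subset ?_
        intro n hn
        rcases Set.mem_symmDiff.1 hn with ⟨hn1, hn2⟩ | ⟨hn1, hn2⟩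
        · simp only [huast, Set.mem_setOf_eq, not_and, not_not] at hn2
          simp only [Set.mem_insert_iff, Set.mem_singleton_iff]
          by_contra hc
          push_neg at hc
          exact hc.2 (by tauto)
        · exact absurd hn1.1 hn2
      set aU : ↥(Comp PathE s) := cv s u hindu hfinu with haU
      have hval : (φ aU).1.1 = u ∆ D := by
        have h := hconst aU
        rw [← h]
        show (φ aU).1.1 = aU.1.1 ∆ (aU.1.1 ∆ (φ aU).1.1)
        rw [symmDiff_symmDiff_cancel_left]
      have hindim : ind (u ∆ D) := hval ▸ (indep_iff _).1 (φ aU).1.2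
      have hvmem : v ∈ u ∆ D :=
        Set.mem_symmDiff.2 (Or.inr ⟨hv, fun h => h.2.1 rfl⟩)
      have hv1mem : v + 1 ∈ u ∆ D :=
        Set.mem_symmDiff.2 (Or.inr ⟨hv1, fun h => h.2.2 rfl⟩)
      exact hindim v hvmem hv1mem
    · -- u* = (s minus v,v+1,v+2) plus v+1
      set u0 : Set ℕ := {n ∈ s | n ≠ v ∧ n ≠ v + 1 ∧ n ≠ v + 2} with hu0ast
      have hav : avoid (v + 1) u0 := by
        intro m hm
        obtain ⟨_, hm1, hm2, hm3⟩ := hm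
        exact ⟨by omega, by omega, hm2⟩
      set u : Set ℕ := insert (v + 1) u0 with huast
      have hindu : ind u := ind_insert (ind_mono hs (fun _ h => h.1)) hav
      have hfinu : (s ∆ u).Finite := by
        refine (((Set.finite_singleton (v + 2)).insert (v + 1)).insert v).subset ?_
        intro n hn
        simp only [Set.mem_insert_iff, Set.mem_singleton_iff]
        rcases Set.mem_symmDiff.1 hn with ⟨hn1, hn2⟩ | ⟨hn1, hn2⟩
        · simp only [huast, hu0ast, Set.mem_insert_iff, Set.mem_setOf_eq, not_or, not_and,
            not_not] at hn2
          obtain ⟨hn3, hn4⟩ := hn2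
          by_contra hc
          push_neg at hc
          have := hn4 hn1
          omega
        · rcases hn1 with h | h
          · tauto
          · exact absurd h.1 hn2
      set aU : ↥(Comp PathE s) := cv s u hindu hfinu with haU
      have hval : (φ aU).1.1 = u ∆ D := by
        have h := hconst aU
        rw [← h]
        show (φ aU).1.1 = aU.1.1 ∆ (aU.1.1 ∆ (φ aU).1.1)
        rw [symmDiff_symmDiff_cancel_left]
      have hindim : ind (u ∆ D) := hval ▸ (indep_iff _).1 (φ aU).1.2
      have hvnotu : v ∉ u := by
        rintro (h | h)
        · omega
        · exact h.2.1 rfl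
      have hvmem : v ∈ u ∆ D := Set.mem_symmDiff.2 (Or.inr ⟨hv, hvnotu⟩)
      have hv1mem : v + 1 ∈ u ∆ D :=
        Set.mem_symmDiff.2 (Or.inl ⟨Set.mem_insert _ _, hv1⟩)
      exact hindim v hvmem hv1mem
  intro a
  have h := hconst a
  rw [hDempty] at h
  exact (symmDiff_eq_bot.1 (by rw [h]; rfl)).symm

end Iso5

end S12

theorem stmt12 :
    (∀ (s : Set ℕ) (_hs : Indep PathE s) (φ : GammaComp PathE s ≃g GammaComp PathE s)
        (x : Comp PathE s), φ x = x) ∧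
    (∀ (s t : Set ℕ) (_hs : Indep PathE s) (_ht : Indep PathE t),
        Nonempty (GammaComp PathE s ≃g GammaComp PathE t) → (s ∆ t).Finite) := by
  constructor
  · intro s hs φ x
    exact S12.comp_eq (S12.main_fixed φ ((S12.indep_iff s).1 hs) ((S12.indep_iff s).1 hs) x)
  · rintro s t hs ht ⟨φ⟩
    have hs' := (S12.indep_iff s).1 hs
    have ht' := (S12.indep_iff t).1 ht
    have hsfin : (s ∆ s).Finite := by rw [symmDiff_self]; exact Set.finite_empty
    have h := S12.main_fixed φ hs' ht' (S12.cv s s hs' hsfin)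
    have h2 : (t ∆ (φ (S12.cv s s hs' hsfin)).1.1).Finite := (φ (S12.cv s s hs' hsfin)).2
    rw [h] at h2
    rwa [symmDiff_comm]
end

section
/- Let g be a graph isomorphism between two graphs whose vertices are sets, with adjacency given by symmetric difference of size one, and suppose x₀, x₁, y₀, y₁ form a 4-cycle with x₀ ⊕ y₀ = {v}, x₁ ⊕ y₁ = {v}, x₀ ⊕ x₁ = {w}, y₀ ⊕ y₁ = {w} where v ≠ w. If g(x₀) ⊕ g(y₀) = {u}, then g(x₁) ⊕ g(y₁) = {u} as well. (Images of opposite edges of a 4-cycle in a hypercube-like graph under an isomorphism differ by the same element.) -/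
open scoped symmDiff

variable {V : Type*}

def Cube (α : Type*) : SimpleGraph (Set α) where
  Adj s t := ∃ v, s ∆ t = {v}
  symm := ⟨fun s t ⟨v, h⟩ => ⟨v, by rwa [symmDiff_comm]⟩⟩
  loopless := ⟨fun s ⟨v, h⟩ => by
    rw [symmDiff_self] at h
    exact absurd h.symm (Set.singleton_ne_empty v)⟩


lemma symmDiff_chain3 {γ : Type*} (p q r s : Set γ) :
    p ∆ s = (p ∆ q) ∆ ((q ∆ r) ∆ (r ∆ s)) := by
  ext x
  simp only [Set.mem_symmDiff]
  tauto

lemma symmDiff_chain2 {γ : Type*} (p q r : Set γ) :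
    p ∆ r = (p ∆ q) ∆ (q ∆ r) := by
  ext x
  simp only [Set.mem_symmDiff]
  tauto

theorem stmt15 {α β : Type*} (A : Set (Set α)) (B : Set (Set β))
    (g : (Cube α).induce A ≃g (Cube β).induce B)
    (x₀ x₁ y₀ y₁ : A) (v w : α) (hvw : v ≠ w)
    (h1 : x₀.1 ∆ y₀.1 = {v}) (h2 : x₁.1 ∆ y₁.1 = {v})
    (h3 : x₀.1 ∆ x₁.1 = {w}) (h4 : y₀.1 ∆ y₁.1 = {w})
    (u : β) (hu : (g x₀).1 ∆ (g y₀).1 = {u}) :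
    (g x₁).1 ∆ (g y₁).1 = {u} := by
  -- adjacency of the three other edges
  have hadjx : ((Cube α).induce A).Adj x₀ x₁ := ⟨w, h3⟩
  have hadjy : ((Cube α).induce A).Adj y₀ y₁ := ⟨w, h4⟩
  have hadj1 : ((Cube α).induce A).Adj x₁ y₁ := ⟨v, h2⟩
  obtain ⟨a, ha⟩ : ∃ a, (g x₀).1 ∆ (g x₁).1 = {a} := g.map_adj_iff.mpr hadjx
  obtain ⟨b, hb⟩ : ∃ b, (g y₀).1 ∆ (g y₁).1 = {b} := g.map_adj_iff.mpr hadjy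
  obtain ⟨u', hu'⟩ : ∃ u', (g x₁).1 ∆ (g y₁).1 = {u'} := g.map_adj_iff.mpr hadj1
  -- x₁ ≠ y₀ and y₁ ≠ x₀
  have hx1y0 : x₁ ≠ y₀ := by
    intro h
    have hc : x₁.1 ∆ y₀.1 = ({w} : Set α) ∆ {v} := by
      rw [symmDiff_chain2 x₁.1 x₀.1 y₀.1, symmDiff_comm x₁.1 x₀.1, h3, h1]
    rw [h, symmDiff_self] at hc
    have : v ∈ ({w} : Set α) ∆ {v} := by
      simp [Set.mem_symmDiff, hvw]
    rw [← hc] at this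
    exact this
  have hy1x0 : y₁ ≠ x₀ := by
    intro h
    have hc : y₁.1 ∆ x₀.1 = ({w} : Set α) ∆ {v} := by
      rw [symmDiff_chain2 y₁.1 y₀.1 x₀.1, symmDiff_comm y₁.1 y₀.1, h4,
        symmDiff_comm y₀.1 x₀.1, h1]
    rw [h, symmDiff_self] at hc
    have : v ∈ ({w} : Set α) ∆ {v} := by
      simp [Set.mem_symmDiff, hvw]
    rw [← hc] at this
    exact this
  -- a ≠ u
  have hau : a ≠ u := by
    intro h
    subst h
    have : (g x₀).1 ∆ (g x₁).1 = (g x₀).1 ∆ (g y₀).1 := by rw [ha, hu]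
    have h5 : (g x₁).1 = (g y₀).1 := symmDiff_right_injective _ this
    exact hx1y0 (g.toEquiv.injective (Subtype.ext h5))
  have hbu : b ≠ u := by
    intro h
    subst h
    have : (g y₀).1 ∆ (g y₁).1 = (g y₀).1 ∆ (g x₀).1 := by
      rw [hb, symmDiff_comm (g y₀).1 (g x₀).1, hu]
    have h5 : (g y₁).1 = (g x₀).1 := symmDiff_right_injective _ this
    exact hy1x0 (g.toEquiv.injective (Subtype.ext h5))
  -- the cycle identity in the image
  have hcomb : ({u'} : Set β) = ({a} : Set β) ∆ (({u} : Set β) ∆ {b}) := by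
    rw [← hu', ← ha, ← hu, ← hb,
      symmDiff_chain3 (g x₁).1 (g x₀).1 (g y₀).1 (g y₁).1,
      symmDiff_comm (g x₁).1 (g x₀).1]
  have hab : a = b := by
    by_contra hab
    have hmema : a ∈ ({u'} : Set β) := by
      rw [hcomb]
      simp [Set.mem_symmDiff, hau, hab]
    have hmemu : u ∈ ({u'} : Set β) := by
      rw [hcomb]
      simp [Set.mem_symmDiff, Ne.symm hau, Ne.symm hbu]
    rw [Set.mem_singleton_iff] at hmema hmemu
    exact hau (hmema.trans hmemu.symm)
  subst hab
  rw [hu', hcomb]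
  ext x
  simp only [Set.mem_symmDiff, Set.mem_singleton_iff]
  tauto
end

section
/- Let S and T be simple, locally finite hypergraphs, g : Γ_S(s) → Γ_T(t) an isomorphism of components with g(s) = t, f the induced vertex bijection, and c = f[s] ⊕ t. Then for every finite independent subset a of S, the set f[a] is independent in T. -/
open scoped symmDiff

variable {V : Type*}

theorem stmt18 {VS VT : Type*} (ES : Set (Finset VS)) (ET : Set (Finset VT))
    (hSsimp : SimpleHG ES) (hTsimp : SimpleHG ET) (hSlf : LocFin ES) (hTlf : LocFin ET)
    (s : Set VS) (t : Set VT) (hs : Indep ES s) (ht : Indep ET t)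
    (g : GammaComp ES s ≃g GammaComp ET t)
    (hsC : (⟨s, hs⟩ : {u : Set VS // Indep ES u}) ∈ Comp ES s)
    (hgst : (g ⟨⟨s, hs⟩, hsC⟩).1.1 = t)
    (f : VS → VT) (hfbij : Function.Bijective f)
    (hf : ∀ (v : VS) (hxI : Indep ES (xset ES s v)) (hyI : Indep ES (yset ES s v))
      (hxC : (⟨xset ES s v, hxI⟩ : {u : Set VS // Indep ES u}) ∈ Comp ES s)
      (hyC : (⟨yset ES s v, hyI⟩ : {u : Set VS // Indep ES u}) ∈ Comp ES s),
      (g ⟨⟨xset ES s v, hxI⟩, hxC⟩).1.1 ∆ (g ⟨⟨yset ES s v, hyI⟩, hyC⟩).1.1 = {f v})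
    (hgr : ∀ r : Comp ES s, (g r).1.1 = (f '' r.1.1) ∆ ((f '' s) ∆ t)) :
    ∀ a : Set VS, a.Finite → Indep ES a → Indep ET (f '' a) := by
  intro a hafin haI e' he' hsub
  -- preimage of the edge e'
  set eS : Set VS := f ⁻¹' (e' : Set VT) with heSdef
  have heSa : eS ⊆ a := by
    intro v hv
    obtain ⟨u, hu, huv⟩ := hsub hv
    rwa [hfbij.1 huv] at hu
  have heSfin : eS.Finite :=
    Set.Finite.preimage (Function.Injective.injOn hfbij.1) e'.finite_toSet
  -- edges meeting eS
  set ESet : Set (Finset VS) := {e0 | e0 ∈ ES ∧ ∃ v ∈ e0, v ∈ eS} with hESetdef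
  have hESetfin : ESet.Finite := by
    have hsub2 : ESet ⊆ ⋃ v ∈ eS, {e0 ∈ ES | v ∈ e0} := by
      rintro e0 ⟨h1, v, hv1, hv2⟩
      exact Set.mem_biUnion hv2 ⟨h1, hv1⟩
    exact Set.Finite.subset (heSfin.biUnion fun v _ => hSlf v) hsub2
  set N : Set VS := ⋃ e0 ∈ ESet, (e0 : Set VS) with hNdef
  have hNfin : N.Finite := hESetfin.biUnion fun e0 _ => e0.finite_toSet
  set U : Set VS := eS ∪ N with hUdef
  have hUfin : U.Finite := heSfin.union hNfin
  set c : Set VT := (f '' s) ∆ t with hcdef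
  set e1 : Set VS := {v ∈ eS | f v ∉ c} with he1def
  set r : Set VS := (s \ U) ∪ e1 with hrdef
  have he1eS : e1 ⊆ eS := fun v hv => hv.1
  -- r is independent
  have hrI : Indep ES r := by
    intro e0 he0 hsub0
    by_cases hmeet : ∃ v ∈ e0, v ∈ eS
    · -- e0 ⊆ N ⊆ U, hence e0 ⊆ e1 ⊆ a
      have he0U : (e0 : Set VS) ⊆ U := by
        intro v hv
        exact Or.inr (Set.mem_biUnion (⟨he0, hmeet⟩ : e0 ∈ ESet) hv)
      have : (e0 : Set VS) ⊆ a := by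
        intro v hv
        rcases hsub0 hv with h | h
        · exact absurd (he0U hv) h.2
        · exact heSa (he1eS h)
      exact haI e0 he0 this
    · push_neg at hmeet
      have : (e0 : Set VS) ⊆ s := by
        intro v hv
        rcases hsub0 hv with h | h
        · exact h.1
        · exact absurd (he1eS h) (hmeet v hv)
      exact hs e0 he0 this
  -- r is in the component
  have hrC : (⟨r, hrI⟩ : {u : Set VS // Indep ES u}) ∈ Comp ES s := by
    have : s ∆ r ⊆ U := by
      intro v hv
      rcases Set.mem_symmDiff.mp hv with ⟨hv1, hv2⟩ | ⟨hv1, hv2⟩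
      · by_contra hU
        exact hv2 (Or.inl ⟨hv1, hU⟩)
      · rcases hv1 with h | h
        · exact absurd h.1 hv2
        · exact Or.inl (he1eS h)
    exact hUfin.subset this
  set R : Comp ES s := ⟨⟨r, hrI⟩, hrC⟩ with hRdef
  -- e' is contained in g R, contradicting independence of g R
  have hkey : (e' : Set VT) ⊆ (f '' r) ∆ c := by
    intro w hw
    obtain ⟨v, hvw⟩ := hfbij.2 w
    have hveS : v ∈ eS := by rw [heSdef, Set.mem_preimage, hvw]; exact hw
    have hvU : v ∈ U := Or.inl hveS
    by_cases hc : w ∈ c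
    · -- w ∈ c, show w ∉ f '' r
      refine Set.mem_symmDiff.mpr (Or.inr ⟨hc, ?_⟩)
      rintro ⟨u, hu, huw⟩
      have huv : u = v := hfbij.1 (huw.trans hvw.symm)
      subst huv
      rcases hu with h | h
      · exact h.2 hvU
      · exact h.2 (by rw [hvw]; exact hc)
    · refine Set.mem_symmDiff.mpr (Or.inl ⟨⟨v, ?_, hvw⟩, hc⟩)
      rw [← hvw] at hc
      exact Or.inr ⟨hveS, hc⟩
  have hgR := hgr R
  have : (e' : Set VT) ⊆ (g R).1.1 := by rw [hgR]; exact hkey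
  exact (g R).1.2 e' he' this
end
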